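/- arXiv:2010.06919 — 3 statements merged into one kernel-verified Lean document; each statement's English description precedes it below -/
import Mathlib

section
/- Let h > 0, p ∈ ℕ, and let ξ₀ < ξ₁ < … < ξ_{n+1} be real numbers with |ξ_{i+1} − ξ_i| > 2h for i = 0,…,n. Let q : (ξ₀, ξ_{n+1}) → ℝ be a polynomial of degree at most p on each interval (ξ_i, ξ_{i+1}), i = 0,…,n, and let φ̂ : (−1,1) → ℝ be such that, for some k ∈ ℕ₀, φ̂ is a polynomial of degree at most k on (−1,0) and a polynomial of degree at most k on (0,1). Define Ψ(y) = ∫_{−1}^{1} φ̂(x) q(hx + y) dx for y ∈ (ξ₀ + h, ξ_{n+1} − h). Then: (1) Ψ coincides with a polynomial of degree at most p on (ξ_i + h, ξ_{i+1} − h) for every i = 0,…,n; (2) Ψ coincides with a polynomial of degree at most p+k+1 on (ξ_i, ξ_i + h) for every i = 1,…,n; (3) Ψ coincides with a polynomial of degree at most p+k+1 on (ξ_i − h, ξ_i) for every i = 1,…,n. -/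
open MeasureTheory Set Polynomial

/-! Common definitions: Lebesgue/Sobolev norms on `I = (0,1)`, finite element
spaces on the uniform dyadic grid `T_L`, the singularly perturbed problem
`-δ²u'' + cu = f`, and (Q)TT decompositions of vectors in `ℝ^{2^L}`. -/

/-- Squared `L²(0,1)` norm. -/
noncomputable def L2sq (v : ℝ → ℝ) : ℝ := ∫ x in Ioo (0:ℝ) 1, (v x)^2

/-- `L²(0,1)` norm. -/
noncomputable def L2norm (v : ℝ → ℝ) : ℝ := Real.sqrt (L2sq v)

/-- `H¹(0,1)` norm of a function `v` with derivative `v'`. -/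
noncomputable def H1norm (v v' : ℝ → ℝ) : ℝ := Real.sqrt (L2sq v + L2sq v')

/-- `H²(0,1)` norm of a function `v` with derivatives `v'`, `v''`. -/
noncomputable def H2norm (v v' v'' : ℝ → ℝ) : ℝ := Real.sqrt (L2sq v + L2sq v' + L2sq v'')

/-- Energy norm `‖v‖_δ = (δ²‖v'‖² + ‖v‖²)^(1/2)`. -/
noncomputable def energyNorm (δ : ℝ) (v v' : ℝ → ℝ) : ℝ := Real.sqrt (δ^2 * L2sq v' + L2sq v)

/-- Membership in `L²(0,1)`. -/
def MemL2 (v : ℝ → ℝ) : Prop := IntegrableOn (fun x => (v x)^2) (Ioo (0:ℝ) 1)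

/-- `v ∈ H¹(0,1)` with (weak) derivative `v'`: `v` is absolutely continuous on `[0,1]`
(the fundamental theorem of calculus holds with density `v'`) and `v, v' ∈ L²(0,1)`. -/
def IsH1 (v v' : ℝ → ℝ) : Prop :=
  (∀ x ∈ Icc (0:ℝ) 1, v x = v 0 + ∫ t in (0:ℝ)..x, v' t) ∧
  ContinuousOn v (Icc (0:ℝ) 1) ∧ MemL2 v ∧ MemL2 v'

/-- `v ∈ H²(0,1)` with derivatives `v'` and `v''`. -/
def IsH2 (v v' v'' : ℝ → ℝ) : Prop := IsH1 v v' ∧ IsH1 v' v''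

/-- The bilinear form `a_δ(u,v) = ∫_I (δ² u'v' + c u v)`. -/
noncomputable def aForm (δ : ℝ) (c : ℝ → ℝ) (u u' v v' : ℝ → ℝ) : ℝ :=
  ∫ x in Ioo (0:ℝ) 1, (δ^2 * u' x * v' x + c x * u x * v x)

/-- Mesh width `h = 1/(2^L+1)` of the uniform grid `T_L`. -/
noncomputable def gridh (L : ℕ) : ℝ := 1 / (2^L + 1)

/-- Continuous, piecewise affine functions on the uniform grid `T_L`
with nodes `x_j = j·h`, `j = 0,…,2^L+1`. -/
def PL (L : ℕ) (w : ℝ → ℝ) : Prop :=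
  ContinuousOn w (Icc (0:ℝ) 1) ∧
  ∀ j : ℕ, j < 2^L + 1 →
    ∃ a b : ℝ, ∀ x ∈ Icc ((j:ℝ) * gridh L) (((j:ℝ)+1) * gridh L), w x = a * x + b

/-- `V^L₀`: continuous piecewise affine on `T_L`, vanishing at the endpoints. -/
def PL0 (L : ℕ) (w : ℝ → ℝ) : Prop := PL L w ∧ w 0 = 0 ∧ w 1 = 0

/-- `V^L` with boundary values `α₀`, `α₁`. -/
def MemVL (L : ℕ) (α₀ α₁ : ℝ) (w : ℝ → ℝ) : Prop := PL L w ∧ w 0 = α₀ ∧ w 1 = α₁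

/-- The Lagrange hat function at node `x_i = i·h` of the grid `T_L`. -/
noncomputable def hat (L : ℕ) (i : ℕ) (x : ℝ) : ℝ :=
  max 0 (1 - |x - (i:ℝ) * gridh L| / gridh L)

/-- Membership in `V(I, p, T^hp_κ)`: continuous on `[0,1]`, a polynomial of degree `≤ p`
on each of the three subintervals of the grid `{0, min(1/4,κ), 1-min(1/4,κ), 1}`,
with boundary values `α₀`, `α₁`. -/
def MemVhp (p : ℕ) (κ α₀ α₁ : ℝ) (v : ℝ → ℝ) : Prop :=
  ContinuousOn v (Icc (0:ℝ) 1) ∧ v 0 = α₀ ∧ v 1 = α₁ ∧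
  ∃ P₁ P₂ P₃ : Polynomial ℝ,
    P₁.natDegree ≤ p ∧ P₂.natDegree ≤ p ∧ P₃.natDegree ≤ p ∧
    (∀ x ∈ Icc (0:ℝ) (min (1/4) κ), v x = P₁.eval x) ∧
    (∀ x ∈ Icc (min (1/4) κ) (1 - min (1/4) κ), v x = P₂.eval x) ∧
    (∀ x ∈ Icc (1 - min (1/4) κ) 1, v x = P₃.eval x)

/-- Weak solution `u ∈ H¹(0,1)` (with weak derivative `u'`) of
`-δ²u'' + cu = f` in `(0,1)`, `u(0) = α₀`, `u(1) = α₁`. -/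
def WeakSol (δ : ℝ) (c f : ℝ → ℝ) (α₀ α₁ : ℝ) (u u' : ℝ → ℝ) : Prop :=
  IsH1 u u' ∧ u 0 = α₀ ∧ u 1 = α₁ ∧
  ∀ v v' : ℝ → ℝ, IsH1 v v' → v 0 = 0 → v 1 = 0 →
    aForm δ c u u' v v' = ∫ x in Ioo (0:ℝ) 1, f x * v x

/-- Strong solution `u ∈ H²(0,1)` with homogeneous Dirichlet boundary conditions:
`-δ²u'' + c u = f` a.e. in `(0,1)`, `u(0)=u(1)=0`. -/
def StrongSol0 (δ : ℝ) (c f : ℝ → ℝ) (u u' u'' : ℝ → ℝ) : Prop :=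
  IsH2 u u' u'' ∧ u 0 = 0 ∧ u 1 = 0 ∧
  ∀ᵐ x ∂(volume.restrict (Ioo (0:ℝ) 1)), -δ^2 * u'' x + c x * u x = f x

/-- `Pv` (with derivative `Pv'`) is the Galerkin projection of `v` (with derivative `v'`)
onto `V^L₀`: `Pv ∈ V^L₀` and `a_δ(Pv - v, w) = 0` for all `w ∈ V^L₀`. -/
def IsGalerkin0 (δ : ℝ) (c : ℝ → ℝ) (L : ℕ) (v v' Pv Pv' : ℝ → ℝ) : Prop :=
  PL0 L Pv ∧ IsH1 Pv Pv' ∧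
  ∀ w w' : ℝ → ℝ, PL0 L w → IsH1 w w' →
    aForm δ c (fun x => Pv x - v x) (fun x => Pv' x - v' x) w w' = 0

/-- The `K`-functional between `L²(0,1)` and `H¹₀(0,1)`:
`K(t,v) = inf {‖v₀‖_{L²} + t‖v₁‖_{H¹} : v = v₀ + v₁, v₀ ∈ L², v₁ ∈ H¹₀}`. -/
noncomputable def Kfun (t : ℝ) (v : ℝ → ℝ) : ℝ :=
  sInf {s : ℝ | ∃ v₀ v₁ v₁' : ℝ → ℝ, (∀ x, v x = v₀ x + v₁ x) ∧ MemL2 v₀ ∧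
    IsH1 v₁ v₁' ∧ v₁ 0 = 0 ∧ v₁ 1 = 0 ∧ s = L2norm v₀ + t * H1norm v₁ v₁'}

/-- The set `{K(t,v)/√t : t > 0}` over which the `H^{1/2,∞}` norm is taken. -/
def HhalfSet (v : ℝ → ℝ) : Set ℝ := {s : ℝ | ∃ t : ℝ, 0 < t ∧ s = Kfun t v / Real.sqrt t}

/-- The interpolation norm `‖v‖_{1/2,∞} = sup_{t>0} K(t,v)/t^{1/2}`. -/
noncomputable def HhalfNorm (v : ℝ → ℝ) : ℝ := sSup (HhalfSet v)

/-- `v ∈ H^{1/2,∞}(0,1)`: the sup defining `‖v‖_{1/2,∞}` is finite. -/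
def MemHhalf (v : ℝ → ℝ) : Prop := BddAbove (HhalfSet v)

/-- Partial products `V¹(i₁)⋯Vⁿ(iₙ)` of TT-cores. -/
def qttEntry {rk : ℕ → ℕ}
    (V : ∀ j : ℕ, Fin 2 → Matrix (Fin (rk j)) (Fin (rk (j+1))) ℝ) :
    (n : ℕ) → (Fin n → Fin 2) → Matrix (Fin (rk 0)) (Fin (rk n)) ℝ
  | 0, _ => 1
  | n+1, i => qttEntry V n (fun j => i j.castSucc) * V n (i (Fin.last n))

/-- The binary digits `i_1,…,i_L` of an index `i = Σ_{j=1}^L 2^{L-j} i_j`. -/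
def bits (L : ℕ) (i : ℕ) : Fin L → Fin 2 :=
  fun j => ⟨i / 2^(L - 1 - (j:ℕ)) % 2, Nat.mod_lt _ (by norm_num)⟩

/-- `u ∈ ℝ^{2^L}` admits a QTT decomposition with rank sequence `rk`
(`rk 0 = rk L = 1`): `u(i) = V¹(i₁)⋯V^L(i_L)` for all indices `i`. -/
def HasQTTRanks (L : ℕ) (u : Fin (2^L) → ℝ) (rk : ℕ → ℕ) : Prop :=
  rk 0 = 1 ∧ rk L = 1 ∧
  ∃ V : ∀ j : ℕ, Fin 2 → Matrix (Fin (rk j)) (Fin (rk (j+1))) ℝ,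
    ∀ (i : Fin (2^L)) (a : Fin (rk 0)) (b : Fin (rk L)),
      u i = qttEntry V L (bits L (i:ℕ)) a b

/-- `u ∈ ℝ^{2^L}` admits a QTT decomposition with all ranks `r_1,…,r_{L-1}` bounded by `r`. -/
def HasQTT (L : ℕ) (u : Fin (2^L) → ℝ) (r : ℕ) : Prop :=
  ∃ rk : ℕ → ℕ, HasQTTRanks L u rk ∧ ∀ j : ℕ, 0 < j → j < L → rk j ≤ r

/-- Number of parameters `Σ_{j=1}^L r_{j-1}·2·r_j` of a QTT decomposition with ranks `rk`. -/
def Ndof (L : ℕ) (rk : ℕ → ℕ) : ℕ := ∑ j ∈ Finset.range L, rk j * 2 * rk (j+1)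

/-- Partial products of matrix (operator) TT-cores. -/
def qttEntryM {rk : ℕ → ℕ}
    (V : ∀ j : ℕ, Fin 2 → Fin 2 → Matrix (Fin (rk j)) (Fin (rk (j+1))) ℝ) :
    (n : ℕ) → (Fin n → Fin 2) → (Fin n → Fin 2) → Matrix (Fin (rk 0)) (Fin (rk n)) ℝ
  | 0, _, _ => 1
  | n+1, i, m =>
      qttEntryM V n (fun j => i j.castSucc) (fun j => m j.castSucc) *
        V n (i (Fin.last n)) (m (Fin.last n))

/-- A matrix `A ∈ ℝ^{2^L × 2^L}` admits a matrix QTT decomposition with rank sequence `rk`: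
`A(i,m) = V¹(i₁,m₁)⋯V^L(i_L,m_L)`. -/
def HasMatrixQTTRanks (L : ℕ) (A : Matrix (Fin (2^L)) (Fin (2^L)) ℝ) (rk : ℕ → ℕ) : Prop :=
  rk 0 = 1 ∧ rk L = 1 ∧
  ∃ V : ∀ j : ℕ, Fin 2 → Fin 2 → Matrix (Fin (rk j)) (Fin (rk (j+1))) ℝ,
    ∀ (i m : Fin (2^L)) (a : Fin (rk 0)) (b : Fin (rk L)),
      A i m = qttEntryM V L (bits L (i:ℕ)) (bits L (m:ℕ)) a b

namespace Stmt2Aux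

/-- Evaluation of a bivariate polynomial (outer variable `x`, inner variable `y`). -/
noncomputable def ev2 (P : Polynomial (Polynomial ℝ)) (x y : ℝ) : ℝ :=
  (P.map (evalRingHom y)).eval x

/-- Total degree bound predicate. -/
def TD (P : Polynomial (Polynomial ℝ)) (d : ℕ) : Prop :=
  ∀ i j : ℕ, d < i + j → (P.coeff j).coeff i = 0

/-- Inner degree bound predicate. -/
def ID (P : Polynomial (Polynomial ℝ)) (d : ℕ) : Prop :=
  ∀ j : ℕ, (P.coeff j).natDegree ≤ d

theorem TD_mono {P : Polynomial (Polynomial ℝ)} {d e : ℕ} (hde : d ≤ e) (hP : TD P d) :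
    TD P e := fun i j hij => hP i j (lt_of_le_of_lt hde hij)

theorem TD_zero (d : ℕ) : TD 0 d := by intro i j _; simp

theorem TD_add {P R : Polynomial (Polynomial ℝ)} {d : ℕ} (hP : TD P d) (hR : TD R d) :
    TD (P + R) d := by
  intro i j hij
  rw [coeff_add, Polynomial.coeff_add, hP i j hij, hR i j hij, add_zero]

theorem TD_mul {P R : Polynomial (Polynomial ℝ)} {d e : ℕ} (hP : TD P d) (hR : TD R e) :
    TD (P * R) (d + e) := by
  intro i j hij
  rw [coeff_mul, finset_sum_coeff]
  refine Finset.sum_eq_zero fun x hx => ?_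
  rw [Polynomial.coeff_mul]
  refine Finset.sum_eq_zero fun z hz => ?_
  rw [Finset.HasAntidiagonal.mem_antidiagonal] at hx hz
  rcases lt_or_ge d (z.1 + x.1) with hlt | hle
  · rw [hP z.1 x.1 hlt, zero_mul]
  · rw [hR z.2 x.2 (by omega), mul_zero]

theorem TD_pow {P : Polynomial (Polynomial ℝ)} {d : ℕ} (hP : TD P d) (m : ℕ) :
    TD (P ^ m) (m * d) := by
  induction m with
  | zero =>
    intro i j hij
    simp only [pow_zero, Nat.zero_mul] at *
    rcases Nat.eq_zero_or_pos j with hj | hj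
    · subst hj
      rw [coeff_one, if_pos rfl, Polynomial.coeff_one, if_neg (by omega)]
    · rw [coeff_one, if_neg (by omega)]
      simp
  | succ m ih =>
    have := TD_mul ih hP
    rw [pow_succ]
    exact TD_mono (by ring_nf; omega) this

theorem TD_sum {ι : Type*} (s : Finset ι) (f : ι → Polynomial (Polynomial ℝ)) {d : ℕ}
    (hf : ∀ a ∈ s, TD (f a) d) : TD (∑ a ∈ s, f a) d := by
  classical
  induction s using Finset.induction_on with
  | empty => simpa using TD_zero d
  | insert _ _ hni ih =>
    rw [Finset.sum_insert hni]
    exact TD_add (hf _ (Finset.mem_insert_self _ _))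
      (ih fun a ha => hf a (Finset.mem_insert_of_mem ha))

theorem TD_C {q : Polynomial ℝ} {d : ℕ} (hq : q.natDegree ≤ d) : TD (C q) d := by
  intro i j hij
  rw [coeff_C]
  split_ifs with hj
  · subst hj
    exact Polynomial.coeff_eq_zero_of_natDegree_lt (by omega)
  · simp

theorem TD_natDegree_coeff {P : Polynomial (Polynomial ℝ)} {d : ℕ} (hP : TD P d) (j : ℕ)
    (h0 : P.coeff j ≠ 0) : (P.coeff j).natDegree + j ≤ d := by
  by_contra hc
  exact h0 (Polynomial.leadingCoeff_eq_zero.mp (hP _ j (by omega)))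

theorem ID_of_TD {P : Polynomial (Polynomial ℝ)} {d : ℕ} (hP : TD P d) : ID P d := by
  intro j
  by_cases h0 : P.coeff j = 0
  · simp [h0]
  · have := TD_natDegree_coeff hP j h0; omega


/-- Formal antiderivative of a real polynomial, using coefficients up to `N`. -/
noncomputable def ranti (N : ℕ) (R : Polynomial ℝ) : Polynomial ℝ :=
  ∑ j ∈ Finset.range N, C (((j : ℝ) + 1)⁻¹ * R.coeff j) * X ^ (j + 1)

/-- Formal antiderivative in the outer variable of a bivariate polynomial. -/
noncomputable def ianti (N : ℕ) (P : Polynomial (Polynomial ℝ)) : Polynomial (Polynomial ℝ) :=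
  ∑ j ∈ Finset.range N, C (Polynomial.C (((j : ℝ) + 1)⁻¹) * P.coeff j) * X ^ (j + 1)

theorem integral_poly (R : Polynomial ℝ) {N : ℕ} (hN : R.natDegree < N) (a b : ℝ) :
    ∫ x in a..b, R.eval x = (ranti N R).eval b - (ranti N R).eval a := by
  have hsum : ∀ x : ℝ, R.eval x = ∑ j ∈ Finset.range N, R.coeff j * x ^ j :=
    fun x => eval_eq_sum_range' hN x
  have heval : ∀ c : ℝ, (ranti N R).eval c
      = ∑ j ∈ Finset.range N, ((j : ℝ) + 1)⁻¹ * R.coeff j * c ^ (j + 1) := by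
    intro c
    simp [ranti, eval_finset_sum]
  rw [intervalIntegral.integral_congr (g := fun x => ∑ j ∈ Finset.range N, R.coeff j * x ^ j)
    (fun x _ => hsum x)]
  rw [intervalIntegral.integral_finset_sum (f := fun j x => R.coeff j * x ^ j) (fun j _ =>
    ((continuous_const.mul (continuous_pow j) : Continuous fun x : ℝ => R.coeff j * x ^ j).intervalIntegrable a b))]
  rw [heval, heval, ← Finset.sum_sub_distrib]
  refine Finset.sum_congr rfl fun j _ => ?_
  rw [intervalIntegral.integral_const_mul, integral_pow]
  have hj : ((j : ℝ) + 1) ≠ 0 := by positivity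
  field_simp

theorem map_ianti (N : ℕ) (P : Polynomial (Polynomial ℝ)) (y : ℝ) :
    (ianti N P).map (evalRingHom y) = ranti N (P.map (evalRingHom y)) := by
  unfold ianti ranti
  rw [Polynomial.map_sum]
  refine Finset.sum_congr rfl fun j _ => ?_
  simp [coeff_map]

theorem ev2_eval (P : Polynomial (Polynomial ℝ)) (l : Polynomial ℝ) (y : ℝ) :
    (P.eval l).eval y = ev2 P (l.eval y) y := by
  unfold ev2
  rw [eval_map]
  have := hom_eval₂ P (RingHom.id (Polynomial ℝ)) (evalRingHom y) l
  simpa using this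

theorem integral_ev2 {P : Polynomial (Polynomial ℝ)} {N : ℕ} (hN : P.natDegree < N)
    (a b y : ℝ) :
    ∫ x in a..b, ev2 P x y = ev2 (ianti N P) b y - ev2 (ianti N P) a y := by
  unfold ev2
  rw [map_ianti]
  exact integral_poly _ (lt_of_le_of_lt natDegree_map_le hN) a b

/-- `q(h·x + y)` as a bivariate polynomial. -/
noncomputable def AQ (h : ℝ) (Q : Polynomial ℝ) : Polynomial (Polynomial ℝ) :=
  eval₂ ((C : Polynomial ℝ →+* Polynomial (Polynomial ℝ)).comp (C : ℝ →+* Polynomial ℝ))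
    (C (C h) * X + C X) Q

theorem ev2_AQ (h : ℝ) (Q : Polynomial ℝ) (x y : ℝ) :
    ev2 (AQ h Q) x y = Q.eval (h * x + y) := by
  unfold ev2 AQ
  have key := hom_eval₂ Q
    ((C : Polynomial ℝ →+* Polynomial (Polynomial ℝ)).comp (C : ℝ →+* Polynomial ℝ))
    ((evalRingHom x).comp (mapRingHom (evalRingHom y))) (C (C h) * X + C X)
  have h1 : ((evalRingHom x).comp (mapRingHom (evalRingHom y))).comp
      ((C : Polynomial ℝ →+* Polynomial (Polynomial ℝ)).comp (C : ℝ →+* Polynomial ℝ))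
      = RingHom.id ℝ := by
    ext a
    simp
  have h2 : ((evalRingHom x).comp (mapRingHom (evalRingHom y))) (C (C h) * X + C X)
      = h * x + y := by
    simp
  rw [h1, h2] at key
  simpa using key

theorem ev2_mul (P R : Polynomial (Polynomial ℝ)) (x y : ℝ) :
    ev2 (P * R) x y = ev2 P x y * ev2 R x y := by
  unfold ev2; rw [Polynomial.map_mul, eval_mul]

theorem ev2_mapC (φ : Polynomial ℝ) (x y : ℝ) :
    ev2 (φ.map (C : ℝ →+* Polynomial ℝ)) x y = φ.eval x := by
  unfold ev2
  rw [map_map]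
  have : (evalRingHom y).comp (C : ℝ →+* Polynomial ℝ) = RingHom.id ℝ := by ext a; simp
  rw [this, Polynomial.map_id]


theorem TD_lin (h : ℝ) : TD (C (C h) * X + C X : Polynomial (Polynomial ℝ)) 1 := by
  intro i j hij
  rw [coeff_add, coeff_C_mul, coeff_X, coeff_C]
  rcases j with _ | _ | j
  · rw [if_neg (by omega), if_pos rfl, mul_zero, zero_add, Polynomial.coeff_X,
      if_neg (by omega)]
  · rw [if_pos rfl, if_neg (by omega), mul_one, add_zero, Polynomial.coeff_C,
      if_neg (by omega)]
  · rw [if_neg (by omega), if_neg (by omega), mul_zero, add_zero]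
    simp

theorem TD_AQ {h : ℝ} {Q : Polynomial ℝ} {p : ℕ} (hQ : Q.natDegree ≤ p) : TD (AQ h Q) p := by
  unfold AQ
  rw [eval₂_eq_sum, Polynomial.sum]
  refine TD_sum _ _ fun m hm => ?_
  have hmp : m ≤ p := le_trans (le_natDegree_of_mem_supp m hm) hQ
  have h1 : TD ((C : Polynomial ℝ →+* Polynomial (Polynomial ℝ)).comp (C : ℝ →+* Polynomial ℝ)
      (Q.coeff m)) 0 := TD_C (by simp)
  have h2 := TD_mul h1 (TD_pow (TD_lin h) m)
  exact TD_mono (by omega) h2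

theorem TD_mapC {φ : Polynomial ℝ} {k : ℕ} (hφ : φ.natDegree ≤ k) :
    TD (φ.map (C : ℝ →+* Polynomial ℝ)) k := by
  intro i j hij
  rw [coeff_map]
  rw [Polynomial.coeff_C]
  split_ifs with hi
  · subst hi
    exact Polynomial.coeff_eq_zero_of_natDegree_lt (by omega)
  · rfl

theorem ID_mapC (φ : Polynomial ℝ) : ID (φ.map (C : ℝ →+* Polynomial ℝ)) 0 := by
  intro j; rw [coeff_map]; simp

theorem ID_mul {P R : Polynomial (Polynomial ℝ)} {d e : ℕ} (hP : ID P d) (hR : ID R e) :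
    ID (P * R) (d + e) := by
  intro j
  rw [coeff_mul]
  refine natDegree_sum_le_of_forall_le _ _ fun x _ => ?_
  exact le_trans natDegree_mul_le (add_le_add (hP x.1) (hR x.2))

theorem coeff_ianti (N : ℕ) (P : Polynomial (Polynomial ℝ)) (m : ℕ) :
    (ianti N P).coeff m
      = ∑ j ∈ Finset.range N,
          (if j + 1 = m then Polynomial.C (((j : ℝ) + 1)⁻¹) * P.coeff j else 0) := by
  unfold ianti
  rw [finset_sum_coeff]
  refine Finset.sum_congr rfl fun j _ => ?_
  rw [coeff_C_mul, coeff_X_pow]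
  by_cases hh : j + 1 = m
  · rw [if_pos hh, if_pos hh.symm, mul_one]
  · rw [if_neg hh, if_neg (fun e => hh e.symm), mul_zero]

theorem TD_ianti {P : Polynomial (Polynomial ℝ)} {d : ℕ} (hP : TD P d) (N : ℕ) :
    TD (ianti N P) (d + 1) := by
  intro i m him
  rw [coeff_ianti, finset_sum_coeff]
  refine Finset.sum_eq_zero fun j _ => ?_
  split_ifs with hh
  · rw [Polynomial.coeff_C_mul, hP i j (by omega), mul_zero]
  · simp

theorem ID_ianti {P : Polynomial (Polynomial ℝ)} {d : ℕ} (hP : ID P d) (N : ℕ) :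
    ID (ianti N P) d := by
  intro m
  rw [coeff_ianti]
  refine natDegree_sum_le_of_forall_le _ _ fun j _ => ?_
  split_ifs with hh
  · exact le_trans (natDegree_C_mul_le _ _) (hP j)
  · simp

theorem natDegree_eval_le_of_TD {P : Polynomial (Polynomial ℝ)} {d : ℕ} (hP : TD P d)
    {l : Polynomial ℝ} (hl : l.natDegree ≤ 1) : (P.eval l).natDegree ≤ d := by
  rw [eval_eq_sum_range]
  refine natDegree_sum_le_of_forall_le _ _ fun j _ => ?_
  by_cases h0 : P.coeff j = 0
  · simp [h0]
  · have h1 := TD_natDegree_coeff hP j h0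
    refine le_trans natDegree_mul_le ?_
    have h2 : (l ^ j).natDegree ≤ j :=
      le_trans natDegree_pow_le (by nlinarith [Nat.mul_le_mul_left j hl])
    omega

theorem natDegree_evalC_le_of_ID {P : Polynomial (Polynomial ℝ)} {d : ℕ} (hP : ID P d)
    (c : ℝ) : (P.eval (Polynomial.C c)).natDegree ≤ d := by
  rw [eval_eq_sum_range]
  refine natDegree_sum_le_of_forall_le _ _ fun j _ => ?_
  refine le_trans natDegree_mul_le ?_
  have h2 : ((Polynomial.C c : Polynomial ℝ) ^ j).natDegree ≤ 0 := by
    simpa using (natDegree_pow_le :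
      ((Polynomial.C c : Polynomial ℝ) ^ j).natDegree ≤ j * (Polynomial.C c).natDegree)
  have := hP j
  omega


theorem ae_ne (b : ℝ) : ∀ᵐ x : ℝ, x ≠ b := by
  rw [ae_iff]
  convert Real.volume_singleton (a := b) using 2
  ext x
  simp

/-- The main per-piece lemma: on `(a,b)` the integrand agrees with a bivariate
polynomial, so it is integrable and its integral is given by the antiderivative. -/
theorem piece (h : ℝ) (φP QP : Polynomial ℝ) (y a b : ℝ) (hab : a ≤ b)
    {f : ℝ → ℝ} (hf : ∀ x ∈ Set.Ioo a b, f x = φP.eval x * QP.eval (h * x + y)) :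
    IntervalIntegrable f volume a b ∧
    ∫ x in a..b, f x =
      ev2 (ianti (((φP.map (C : ℝ →+* Polynomial ℝ)) * AQ h QP).natDegree + 1)
        ((φP.map (C : ℝ →+* Polynomial ℝ)) * AQ h QP)) b y -
      ev2 (ianti (((φP.map (C : ℝ →+* Polynomial ℝ)) * AQ h QP).natDegree + 1)
        ((φP.map (C : ℝ →+* Polynomial ℝ)) * AQ h QP)) a y := by
  set B := (φP.map (C : ℝ →+* Polynomial ℝ)) * AQ h QP with hB
  have hev : ∀ x, ev2 B x y = φP.eval x * QP.eval (h * x + y) := by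
    intro x
    rw [hB, ev2_mul, ev2_mapC, ev2_AQ]
  have hcont : Continuous fun x => ev2 B x y := Polynomial.continuous _
  have haeb : ∀ᵐ x : ℝ, x ∈ Set.uIoc a b → f x = ev2 B x y := by
    filter_upwards [ae_ne b] with x hxb hx
    rw [Set.uIoc_of_le hab] at hx
    rw [hf x ⟨hx.1, lt_of_le_of_ne hx.2 hxb⟩, hev]
  have h1 : (fun x => ev2 B x y) =ᵐ[volume.restrict (Set.uIoc a b)] f := by
    have h2 : ∀ᵐ x ∂(volume.restrict (Set.uIoc a b)), x ∈ Set.uIoc a b :=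
      ae_restrict_mem measurableSet_uIoc
    have h3 : ∀ᵐ x ∂(volume.restrict (Set.uIoc a b)), x ≠ b := ae_restrict_of_ae (ae_ne b)
    filter_upwards [h2, h3] with x hx hxb
    rw [Set.uIoc_of_le hab] at hx
    rw [hf x ⟨hx.1, lt_of_le_of_ne hx.2 hxb⟩, hev]
  refine ⟨(hcont.intervalIntegrable a b).congr_ae h1, ?_⟩
  rw [intervalIntegral.integral_congr_ae haeb]
  exact integral_ev2 (Nat.lt_succ_self _) a b y


theorem ev2_const (P : Polynomial (Polynomial ℝ)) (c y : ℝ) :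
    ev2 P c y = (P.eval (Polynomial.C c)).eval y := by
  rw [ev2_eval, eval_C]

/-- The product bivariate polynomial `φ(x)·Q(hx+y)`. -/
noncomputable def PP (h : ℝ) (φP QP : Polynomial ℝ) : Polynomial (Polynomial ℝ) :=
  (φP.map (C : ℝ →+* Polynomial ℝ)) * AQ h QP

/-- Its formal antiderivative in `x`. -/
noncomputable def IA (h : ℝ) (φP QP : Polynomial ℝ) : Polynomial (Polynomial ℝ) :=
  ianti ((PP h φP QP).natDegree + 1) (PP h φP QP)

theorem piece' (h : ℝ) (φP QP : Polynomial ℝ) (y a b : ℝ) (hab : a ≤ b)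
    {f : ℝ → ℝ} (hf : ∀ x ∈ Set.Ioo a b, f x = φP.eval x * QP.eval (h * x + y)) :
    IntervalIntegrable f volume a b ∧
    ∫ x in a..b, f x = ev2 (IA h φP QP) b y - ev2 (IA h φP QP) a y :=
  piece h φP QP y a b hab hf

theorem deg_IA_TD {φP QP : Polynomial ℝ} (h : ℝ) {k p : ℕ}
    (hφ : φP.natDegree ≤ k) (hQ : QP.natDegree ≤ p) {l : Polynomial ℝ}
    (hl : l.natDegree ≤ 1) : ((IA h φP QP).eval l).natDegree ≤ p + k + 1 :=
  natDegree_eval_le_of_TD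
    (TD_mono (by omega) (TD_ianti (TD_mul (TD_mapC hφ) (TD_AQ hQ)) _)) hl

theorem deg_IA_ID {φP QP : Polynomial ℝ} (h : ℝ) {p : ℕ}
    (hQ : QP.natDegree ≤ p) (c : ℝ) : ((IA h φP QP).eval (Polynomial.C c)).natDegree ≤ p :=
  natDegree_evalC_le_of_ID
    (ID_ianti (by simpa [PP] using ID_mul (ID_mapC φP) (ID_of_TD (TD_AQ hQ))) _) c

end Stmt2Aux


open Stmt2Aux

/-- local polynomial structure of the mollified function `Ψ`:
if `q` is piecewise polynomial of degree `≤ p` on the partition `ξ₀ < … < ξ_{n+1}`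
with all gaps `> 2h`, and `φ̂` is polynomial of degree `≤ k` on `(-1,0)` and on `(0,1)`,
then `Ψ(y) = ∫_{-1}^1 φ̂(x) q(hx+y) dx` is polynomial of degree `≤ p` on each
`(ξ_i + h, ξ_{i+1} - h)` and of degree `≤ p+k+1` on each `(ξ_i, ξ_i+h)` and `(ξ_i-h, ξ_i)`,
`i = 1,…,n`. -/
theorem stmt2 (h : ℝ) (hh : 0 < h) (p : ℕ) (hp : 0 < p) (n : ℕ) (ξ : ℕ → ℝ)
    (hgap : ∀ i ≤ n, 2 * h < ξ (i+1) - ξ i)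
    (q : ℝ → ℝ)
    (hq : ∀ i ≤ n, ∃ Q : Polynomial ℝ, Q.natDegree ≤ p ∧
      ∀ x ∈ Ioo (ξ i) (ξ (i+1)), q x = Q.eval x)
    (k : ℕ) (φ : ℝ → ℝ)
    (hφ₁ : ∃ Q : Polynomial ℝ, Q.natDegree ≤ k ∧ ∀ x ∈ Ioo (-1:ℝ) 0, φ x = Q.eval x)
    (hφ₂ : ∃ Q : Polynomial ℝ, Q.natDegree ≤ k ∧ ∀ x ∈ Ioo (0:ℝ) 1, φ x = Q.eval x)
    (Ψ : ℝ → ℝ)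
    (hΨ : ∀ y ∈ Ioo (ξ 0 + h) (ξ (n+1) - h), Ψ y = ∫ x in (-1:ℝ)..1, φ x * q (h * x + y)) :
    (∀ i ≤ n, ∃ Q : Polynomial ℝ, Q.natDegree ≤ p ∧
      ∀ y ∈ Ioo (ξ i + h) (ξ (i+1) - h), Ψ y = Q.eval y) ∧
    (∀ i, 1 ≤ i → i ≤ n → ∃ Q : Polynomial ℝ, Q.natDegree ≤ p + k + 1 ∧
      ∀ y ∈ Ioo (ξ i) (ξ i + h), Ψ y = Q.eval y) ∧
    (∀ i, 1 ≤ i → i ≤ n → ∃ Q : Polynomial ℝ, Q.natDegree ≤ p + k + 1 ∧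
      ∀ y ∈ Ioo (ξ i - h) (ξ i), Ψ y = Q.eval y) := by

  have hξ : ∀ i j : ℕ, i ≤ j → j ≤ n + 1 → ξ i ≤ ξ j := by
    intro i j hij hj
    induction j with
    | zero => have : i = 0 := by omega
              subst this; exact le_refl _
    | succ m ih =>
      rcases Nat.eq_or_lt_of_le hij with rfl | hlt
      · exact le_refl _
      · have h1 : ξ i ≤ ξ m := ih (by omega) (by omega)
        have h2 := hgap m (by omega)
        linarith
  obtain ⟨Qφ₁, hdφ₁, heφ₁⟩ := hφ₁
  obtain ⟨Qφ₂, hdφ₂, heφ₂⟩ := hφ₂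
  have hc1 : ∀ c : ℝ, (Polynomial.C c : Polynomial ℝ).natDegree ≤ 1 := fun c => by simp
  refine ⟨?_, ?_, ?_⟩
  · -- Part 1
    intro i hi
    obtain ⟨Q, hQd, hQe⟩ := hq i hi
    refine ⟨((IA h Qφ₁ Q).eval (Polynomial.C 0) - (IA h Qφ₁ Q).eval (Polynomial.C (-1)))
        + ((IA h Qφ₂ Q).eval (Polynomial.C 1) - (IA h Qφ₂ Q).eval (Polynomial.C 0)), ?_, ?_⟩
    · refine le_trans (natDegree_add_le _ _) (max_le
        (le_trans (natDegree_sub_le _ _) (max_le ?_ ?_))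
        (le_trans (natDegree_sub_le _ _) (max_le ?_ ?_))) <;> exact deg_IA_ID h hQd _
    · intro y hy
      have hy' : y ∈ Ioo (ξ 0 + h) (ξ (n+1) - h) := by
        have h1 : ξ 0 ≤ ξ i := hξ 0 i (by omega) (by omega)
        have h2 : ξ (i+1) ≤ ξ (n+1) := hξ (i+1) (n+1) (by omega) (by omega)
        exact ⟨by linarith [hy.1], by linarith [hy.2]⟩
      have harg1 : ∀ x ∈ Ioo (-1:ℝ) 0, φ x * q (h*x+y) = Qφ₁.eval x * Q.eval (h*x+y) := by
        intro x hx
        have hmem : h*x + y ∈ Ioo (ξ i) (ξ (i+1)) := by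
          constructor
          · nlinarith [mul_pos hh (show (0:ℝ) < x + 1 by linarith [hx.1]), hy.1]
          · have := mul_neg_of_pos_of_neg hh hx.2
            linarith [hy.2]
        rw [heφ₁ x hx, hQe _ hmem]
      have harg2 : ∀ x ∈ Ioo (0:ℝ) 1, φ x * q (h*x+y) = Qφ₂.eval x * Q.eval (h*x+y) := by
        intro x hx
        have hmem : h*x + y ∈ Ioo (ξ i) (ξ (i+1)) := by
          constructor
          · have := mul_pos hh hx.1
            linarith [hy.1]
          · have := mul_lt_mul_of_pos_left hx.2 hh
            linarith [hy.2]
        rw [heφ₂ x hx, hQe _ hmem]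
      have hp1 := piece' h Qφ₁ Q y (-1) 0 (by norm_num) harg1
      have hp2 := piece' h Qφ₂ Q y 0 1 (by norm_num) harg2
      rw [hΨ y hy', ← intervalIntegral.integral_add_adjacent_intervals hp1.1 hp2.1,
        hp1.2, hp2.2]
      simp only [ev2_const, eval_add, eval_sub]
      try ring
  · -- Part 2
    intro i h1i hin
    have hi1 : i - 1 + 1 = i := by omega
    obtain ⟨Qa, hQad, hQae⟩ := hq (i-1) (by omega)
    rw [hi1] at hQae
    obtain ⟨Qb, hQbd, hQbe⟩ := hq i (by omega)
    set l : Polynomial ℝ := Polynomial.C (ξ i / h) - Polynomial.C h⁻¹ * Polynomial.X with hl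
    have hldeg : l.natDegree ≤ 1 := by
      refine le_trans (natDegree_sub_le _ _) (max_le (by simp) ?_)
      exact le_trans (natDegree_C_mul_le _ _) (by simp)
    refine ⟨((IA h Qφ₁ Qa).eval l - (IA h Qφ₁ Qa).eval (Polynomial.C (-1)))
        + ((IA h Qφ₁ Qb).eval (Polynomial.C 0) - (IA h Qφ₁ Qb).eval l)
        + ((IA h Qφ₂ Qb).eval (Polynomial.C 1) - (IA h Qφ₂ Qb).eval (Polynomial.C 0)),
        ?_, ?_⟩
    · exact le_trans (natDegree_add_le _ _) (max_le
        (le_trans (natDegree_add_le _ _) (max_le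
          (le_trans (natDegree_sub_le _ _) (max_le
            (deg_IA_TD h hdφ₁ hQad hldeg) (deg_IA_TD h hdφ₁ hQad (hc1 _))))
          (le_trans (natDegree_sub_le _ _) (max_le
            (deg_IA_TD h hdφ₁ hQbd (hc1 _)) (deg_IA_TD h hdφ₁ hQbd hldeg)))))
        (le_trans (natDegree_sub_le _ _) (max_le
          (deg_IA_TD h hdφ₂ hQbd (hc1 _)) (deg_IA_TD h hdφ₂ hQbd (hc1 _)))))
    · intro y hy
      have gim := hgap (i-1) (by omega)
      rw [hi1] at gim
      have gi := hgap i (by omega)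
      have hy' : y ∈ Ioo (ξ 0 + h) (ξ (n+1) - h) := by
        have h1 : ξ 1 ≤ ξ i := hξ 1 i h1i (by omega)
        have h2 : ξ i ≤ ξ n := hξ i n hin (by omega)
        have g0 := hgap 0 (by omega)
        have gn := hgap n (by omega)
        exact ⟨by linarith [hy.1], by linarith [hy.2]⟩
      set t := (ξ i - y) / h with htdef
      have hht : h * t = ξ i - y := by
        rw [htdef]; field_simp
      have ht0 : t < 0 := div_neg_of_neg_of_pos (by linarith [hy.1]) hh
      have ht1 : -1 < t := by
        rw [htdef, lt_div_iff₀ hh]; linarith [hy.2]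
      have harg1 : ∀ x ∈ Ioo (-1:ℝ) t, φ x * q (h*x+y) = Qφ₁.eval x * Qa.eval (h*x+y) := by
        intro x hx
        have hmem : h*x + y ∈ Ioo (ξ (i-1)) (ξ i) := by
          constructor
          · nlinarith [mul_pos hh (show (0:ℝ) < x + 1 by linarith [hx.1]), hy.1]
          · have h3 : h * x < ξ i - y := by
              rw [← hht]; exact mul_lt_mul_of_pos_left hx.2 hh
            linarith
        rw [heφ₁ x ⟨hx.1, lt_trans hx.2 ht0⟩, hQae _ hmem]
      have harg2 : ∀ x ∈ Ioo t 0, φ x * q (h*x+y) = Qφ₁.eval x * Qb.eval (h*x+y) := by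
        intro x hx
        have hmem : h*x + y ∈ Ioo (ξ i) (ξ (i+1)) := by
          constructor
          · have h3 : ξ i - y < h * x := by
              rw [← hht]; exact mul_lt_mul_of_pos_left hx.1 hh
            linarith
          · have := mul_neg_of_pos_of_neg hh hx.2
            linarith [hy.2]
        rw [heφ₁ x ⟨lt_trans ht1 hx.1, hx.2⟩, hQbe _ hmem]
      have harg3 : ∀ x ∈ Ioo (0:ℝ) 1, φ x * q (h*x+y) = Qφ₂.eval x * Qb.eval (h*x+y) := by
        intro x hx
        have hmem : h*x + y ∈ Ioo (ξ i) (ξ (i+1)) := by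
          constructor
          · have := mul_pos hh hx.1
            linarith [hy.1]
          · have := mul_lt_mul_of_pos_left hx.2 hh
            linarith [hy.2]
        rw [heφ₂ x hx, hQbe _ hmem]
      have hp1 := piece' h Qφ₁ Qa y (-1) t (le_of_lt ht1) harg1
      have hp2 := piece' h Qφ₁ Qb y t 0 (le_of_lt ht0) harg2
      have hp3 := piece' h Qφ₂ Qb y 0 1 (by norm_num) harg3
      rw [hΨ y hy',
        ← intervalIntegral.integral_add_adjacent_intervals hp1.1 (hp2.1.trans hp3.1),
        ← intervalIntegral.integral_add_adjacent_intervals hp2.1 hp3.1,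
        hp1.2, hp2.2, hp3.2]
      have hlt : l.eval y = t := by
        rw [hl, htdef]
        simp only [eval_sub, eval_mul, eval_C, eval_X]
        field_simp
      have e1 : ∀ P : Polynomial ℝ[X], ev2 P t y = (P.eval l).eval y := by
        intro P; rw [ev2_eval, hlt]
      simp only [e1]
      simp only [ev2_const, eval_add, eval_sub]
      try ring
  · -- Part 3
    intro i h1i hin
    have hi1 : i - 1 + 1 = i := by omega
    obtain ⟨Qa, hQad, hQae⟩ := hq (i-1) (by omega)
    rw [hi1] at hQae
    obtain ⟨Qb, hQbd, hQbe⟩ := hq i (by omega)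
    set l : Polynomial ℝ := Polynomial.C (ξ i / h) - Polynomial.C h⁻¹ * Polynomial.X with hl
    have hldeg : l.natDegree ≤ 1 := by
      refine le_trans (natDegree_sub_le _ _) (max_le (by simp) ?_)
      exact le_trans (natDegree_C_mul_le _ _) (by simp)
    refine ⟨((IA h Qφ₁ Qa).eval (Polynomial.C 0) - (IA h Qφ₁ Qa).eval (Polynomial.C (-1)))
        + ((IA h Qφ₂ Qa).eval l - (IA h Qφ₂ Qa).eval (Polynomial.C 0))
        + ((IA h Qφ₂ Qb).eval (Polynomial.C 1) - (IA h Qφ₂ Qb).eval l),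
        ?_, ?_⟩
    · exact le_trans (natDegree_add_le _ _) (max_le
        (le_trans (natDegree_add_le _ _) (max_le
          (le_trans (natDegree_sub_le _ _) (max_le
            (deg_IA_TD h hdφ₁ hQad (hc1 _)) (deg_IA_TD h hdφ₁ hQad (hc1 _))))
          (le_trans (natDegree_sub_le _ _) (max_le
            (deg_IA_TD h hdφ₂ hQad hldeg) (deg_IA_TD h hdφ₂ hQad (hc1 _))))))
        (le_trans (natDegree_sub_le _ _) (max_le
          (deg_IA_TD h hdφ₂ hQbd (hc1 _)) (deg_IA_TD h hdφ₂ hQbd hldeg))))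
    · intro y hy
      have gim := hgap (i-1) (by omega)
      rw [hi1] at gim
      have gi := hgap i (by omega)
      have hy' : y ∈ Ioo (ξ 0 + h) (ξ (n+1) - h) := by
        have h1 : ξ 1 ≤ ξ i := hξ 1 i h1i (by omega)
        have h2 : ξ i ≤ ξ n := hξ i n hin (by omega)
        have g0 := hgap 0 (by omega)
        have gn := hgap n (by omega)
        exact ⟨by linarith [hy.1], by linarith [hy.2]⟩
      set t := (ξ i - y) / h with htdef
      have hht : h * t = ξ i - y := by
        rw [htdef]; field_simp
      have ht0 : 0 < t := div_pos (by linarith [hy.2]) hh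
      have ht1 : t < 1 := by
        rw [htdef, div_lt_one hh]; linarith [hy.1]
      have harg1 : ∀ x ∈ Ioo (-1:ℝ) 0, φ x * q (h*x+y) = Qφ₁.eval x * Qa.eval (h*x+y) := by
        intro x hx
        have hmem : h*x + y ∈ Ioo (ξ (i-1)) (ξ i) := by
          constructor
          · nlinarith [mul_pos hh (show (0:ℝ) < x + 1 by linarith [hx.1]), hy.1]
          · have := mul_neg_of_pos_of_neg hh hx.2
            linarith [hy.2]
        rw [heφ₁ x hx, hQae _ hmem]
      have harg2 : ∀ x ∈ Ioo (0:ℝ) t, φ x * q (h*x+y) = Qφ₂.eval x * Qa.eval (h*x+y) := by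
        intro x hx
        have hmem : h*x + y ∈ Ioo (ξ (i-1)) (ξ i) := by
          constructor
          · have := mul_pos hh hx.1
            linarith [hy.1]
          · have h3 : h * x < ξ i - y := by
              rw [← hht]; exact mul_lt_mul_of_pos_left hx.2 hh
            linarith
        rw [heφ₂ x ⟨hx.1, lt_trans hx.2 ht1⟩, hQae _ hmem]
      have harg3 : ∀ x ∈ Ioo t 1, φ x * q (h*x+y) = Qφ₂.eval x * Qb.eval (h*x+y) := by
        intro x hx
        have hmem : h*x + y ∈ Ioo (ξ i) (ξ (i+1)) := by
          constructor
          · have h3 : ξ i - y < h * x := by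
              rw [← hht]; exact mul_lt_mul_of_pos_left hx.1 hh
            linarith
          · have := mul_lt_mul_of_pos_left hx.2 hh
            linarith [hy.2]
        rw [heφ₂ x ⟨lt_trans ht0 hx.1, hx.2⟩, hQbe _ hmem]
      have hp1 := piece' h Qφ₁ Qa y (-1) 0 (by norm_num) harg1
      have hp2 := piece' h Qφ₂ Qa y 0 t (le_of_lt ht0) harg2
      have hp3 := piece' h Qφ₂ Qb y t 1 (le_of_lt ht1) harg3
      rw [hΨ y hy',
        ← intervalIntegral.integral_add_adjacent_intervals hp1.1 (hp2.1.trans hp3.1),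
        ← intervalIntegral.integral_add_adjacent_intervals hp2.1 hp3.1,
        hp1.2, hp2.2, hp3.2]
      have hlt : l.eval y = t := by
        rw [hl, htdef]
        simp only [eval_sub, eval_mul, eval_C, eval_X]
        field_simp
      have e1 : ∀ P : Polynomial ℝ[X], ev2 P t y = (P.eval l).eval y := by
        intro P; rw [ev2_eval, hlt]
      simp only [e1]
      simp only [ev2_const, eval_add, eval_sub]
      try ring
end

section
/- Let L, M ∈ ℕ, p₁,…,p_M ∈ ℕ₀, and let 0 = x₀ < x₁ < … < x_M = 2^L − 1 be real numbers. Let u be a function equal to a polynomial P_m of degree p_m on [x_{m−1}, x_m) for 1 ≤ m ≤ M and with u(x_M) = P_M(x_M). Then the vector u⃗ = (u(0), u(1), …, u(2^L − 1)) ∈ ℝ^{2^L} admits a QTT decomposition with ranks bounded by P + M, where P = max{p₁,…,p_M}. -/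
open MeasureTheory Set Polynomial

section Digits

lemma div_pow_mod_two (L k i : ℕ) (hk : k < L) :
    i % 2^L / 2^k % 2 = i / 2^k % 2 := by
  obtain ⟨q, r, hr, rfl⟩ : ∃ q r, r < 2^L ∧ i = r + q * 2^L :=
    ⟨i / 2^L, i % 2^L, Nat.mod_lt _ (by positivity), (Nat.mod_add_div' i (2^L)).symm⟩
  have hrm : (r + q * 2^L) % 2^L = r := by
    rw [Nat.add_mul_mod_self_right]; exact Nat.mod_eq_of_lt hr
  have hL : (2:ℕ)^L = 2^(L-k) * 2^k := by rw [← pow_add]; congr 1; omega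
  have h2 : (2:ℕ)^(L-k) = 2^(L-k-1) * 2 := by rw [← pow_succ]; congr 1; omega
  rw [hrm, hL, ← mul_assoc, Nat.add_mul_div_right _ _ (by positivity : (0:ℕ) < 2^k),
    h2, ← mul_assoc, Nat.add_mul_mod_self_right]

lemma digit_sum_range : ∀ (L i : ℕ), i < 2^L →
    ∑ k ∈ Finset.range L, (i / 2^k % 2) * 2^k = i := by
  intro L
  induction L with
  | zero => intro i hi; interval_cases i; simp
  | succ L ih =>
    intro i hi
    rw [Finset.sum_range_succ]
    have hmod := ih (i % 2^L) (Nat.mod_lt _ (by positivity))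
    have hsum : ∑ k ∈ Finset.range L, (i / 2^k % 2) * 2^k = i % 2^L := by
      rw [← hmod]
      exact Finset.sum_congr rfl fun k hk => by
        rw [div_pow_mod_two L k i (Finset.mem_range.mp hk)]
    have hq : i / 2^L % 2 = i / 2^L := by
      apply Nat.mod_eq_of_lt
      apply Nat.div_lt_of_lt_mul
      rw [pow_succ] at hi; omega
    rw [hsum, hq]
    exact Nat.mod_add_div' i (2^L)

lemma digit_sum_top (L i : ℕ) (hi : i < 2^L) :
    ∑ j : Fin L, (i / 2^(L-1-(j:ℕ)) % 2) * 2^(L-1-(j:ℕ)) = i := by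
  rw [Fin.sum_univ_eq_sum_range (fun k => i / 2^(L-1-k) % 2 * 2^(L-1-k)) L]
  conv_rhs => rw [← digit_sum_range L i hi]
  apply Finset.sum_nbij' (fun k => L-1-k) (fun k => L-1-k) <;>
    simp only [Finset.mem_range] <;> intros <;>
      first | omega | rfl | trivial | (rw [Nat.sub_sub_self (by omega)])

end Digits

section Abstract

lemma pow_split {L n : ℕ} (h : n < L) : 2^(L-n) = 2^(L-(n+1)) * 2 := by
  rw [← pow_succ]; congr 1; omega

lemma qtt_of_nested (L : ℕ) (u : ℕ → ℝ) (rk : ℕ → ℕ)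
    (h0 : rk 0 = 1) (hLr : rk L = 1)
    (g : ∀ j, Fin (rk j) → ℕ → ℝ)
    (hg0 : ∀ (k : Fin (rk 0)) t, t < 2^L → g 0 k t = u t)
    (hgL : ∀ k : Fin (rk L), g L k 0 = 1)
    (hnest : ∀ j, j < L → ∀ (k : Fin (rk j)) (i : Fin 2),
      ∃ c : Fin (rk (j+1)) → ℝ, ∀ b, b < 2^(L-(j+1)) →
        g j k ((i:ℕ) * 2^(L-(j+1)) + b) = ∑ l, c l * g (j+1) l b) :
    HasQTTRanks L (fun i : Fin (2^L) => u i) rk := by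
  classical
  refine ⟨h0, hLr, ?_⟩
  set V : ∀ j : ℕ, Fin 2 → Matrix (Fin (rk j)) (Fin (rk (j+1))) ℝ :=
    fun j i => if hj : j < L then
      Matrix.of (fun k l => Classical.choose (hnest j hj k i) l) else 0 with hV
  have key : ∀ n, n ≤ L → ∀ (i : Fin n → Fin 2) (b : ℕ), b < 2^(L-n) → ∀ (a : Fin (rk 0)),
      u ((∑ j : Fin n, (i j : ℕ) * 2^(L-1-(j:ℕ))) + b)
        = ∑ l, qttEntry V n i a l * g n l b := by
    intro n
    induction n with
    | zero =>
      intro _ i b hb a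
      have h1 : qttEntry V 0 i = 1 := rfl
      rw [Fin.sum_univ_zero, zero_add, h1]
      rw [Finset.sum_eq_single a]
      · rw [Matrix.one_apply_eq, one_mul]; exact (hg0 a b hb).symm
      · intro l _ hl; rw [Matrix.one_apply_ne' hl, zero_mul]
      · intro h; exact absurd (Finset.mem_univ a) h
    | succ n ih =>
      intro hn i b hb a
      have hnL : n < L := hn
      set c2 : ℕ := 2^(L-(n+1)) with hc2
      have hb' : (i (Fin.last n) : ℕ) * c2 + b < 2^(L-n) := by
        have h2 := pow_split hnL
        have h3 : (i (Fin.last n) : ℕ) ≤ 1 := Nat.lt_succ_iff.mp (i (Fin.last n)).isLt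
        have h4 : (i (Fin.last n) : ℕ) * c2 ≤ 1 * c2 := Nat.mul_le_mul_right c2 h3
        rw [one_mul] at h4
        omega
      have step := ih (le_of_lt hnL) (fun j => i j.castSucc) _ hb' a
      have hidx : (∑ j : Fin (n+1), (i j : ℕ) * 2^(L-1-(j:ℕ))) + b
          = (∑ j : Fin n, (i j.castSucc : ℕ) * 2^(L-1-(j:ℕ)))
            + ((i (Fin.last n) : ℕ) * c2 + b) := by
        rw [Fin.sum_univ_castSucc]
        have he : L - 1 - n = L - (n+1) := by omega
        simp only [Fin.coe_castSucc, Fin.val_last, hc2, he]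
        ring
      rw [hidx, step]
      have hspec : ∀ l : Fin (rk n), g n l ((i (Fin.last n) : ℕ) * c2 + b)
          = ∑ l', V n (i (Fin.last n)) l l' * g (n+1) l' b := by
        intro l
        rw [Classical.choose_spec (hnest n hnL l (i (Fin.last n))) b hb]
        refine Finset.sum_congr rfl fun l' _ => ?_
        congr 1
        simp only [hV, dif_pos hnL, Matrix.of_apply]
      calc ∑ l, qttEntry V n (fun j => i j.castSucc) a l * g n l ((i (Fin.last n) : ℕ) * c2 + b)
          = ∑ l, ∑ l', qttEntry V n (fun j => i j.castSucc) a l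
              * (V n (i (Fin.last n)) l l' * g (n+1) l' b) := by
            refine Finset.sum_congr rfl fun l _ => ?_
            rw [hspec l, Finset.mul_sum]
        _ = ∑ l', (∑ l, qttEntry V n (fun j => i j.castSucc) a l
              * V n (i (Fin.last n)) l l') * g (n+1) l' b := by
            rw [Finset.sum_comm]
            refine Finset.sum_congr rfl fun l' _ => ?_
            rw [Finset.sum_mul]
            exact Finset.sum_congr rfl fun l _ => by ring
        _ = ∑ l', qttEntry V (n+1) i a l' * g (n+1) l' b := by
            exact Finset.sum_congr rfl fun l' _ => by congr 1
  refine ⟨V, fun i a b => ?_⟩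
  have hkey := key L le_rfl (bits L (i:ℕ)) 0 (by simp) a
  have hb : ∀ l : Fin (rk L), l = b := fun l => by
    apply Fin.ext
    have := l.isLt; have := b.isLt
    omega
  have hsum : (∑ j : Fin L, ((bits L (i:ℕ)) j : ℕ) * 2^(L-1-(j:ℕ))) + 0 = (i:ℕ) := by
    rw [add_zero]
    exact digit_sum_top L (i:ℕ) i.isLt
  rw [hsum] at hkey
  show u (i:ℕ) = qttEntry V L (bits L (i:ℕ)) a b
  have hterm : ∀ l : Fin (rk L), qttEntry V L (bits L (i:ℕ)) a l * g L l 0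
      = qttEntry V L (bits L (i:ℕ)) a b := by
    intro l; rw [hb l, hgL b, mul_one]
  rw [hkey, Finset.sum_congr rfl (fun l _ => hterm l), Finset.sum_const, Finset.card_univ,
    Fintype.card_fin, hLr, one_smul]

end Abstract

section Spaces

open Module Submodule

variable (L : ℕ) (u : ℕ → ℝ)

/-- Window functions at level `j`. -/
def windowF (j : ℕ) : Fin (2^j) → Fin (2^(L-j)) → ℝ :=
  fun a b => u ((a:ℕ) * 2^(L-j) + (b:ℕ))

/-- Span of window functions at level `j`. -/
noncomputable def Sspace (j : ℕ) : Submodule ℝ (Fin (2^(L-j)) → ℝ) :=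
  Submodule.span ℝ (Set.range (windowF L u j))

/-- Rank function. -/
noncomputable def rkF : ℕ → ℕ :=
  fun j => if 0 < j ∧ j < L then Module.finrank ℝ (Sspace L u j) else 1

/-- Generating families for the nested-span construction. -/
noncomputable def gF : ∀ j, Fin (rkF L u j) → ℕ → ℝ := fun j k t =>
  if j = 0 then u t
  else if L ≤ j then 1
  else if hk : (k:ℕ) < Module.finrank ℝ (Sspace L u j) then
    (if ht : t < 2^(L-j) then
      ((Module.finBasis ℝ (Sspace L u j) ⟨(k:ℕ), hk⟩ : Sspace L u j) : Fin (2^(L-j)) → ℝ) ⟨t, ht⟩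
    else 0)
  else 0

lemma rkF_mid {j : ℕ} (h0 : 0 < j) (hj : j < L) :
    rkF L u j = Module.finrank ℝ (Sspace L u j) := if_pos ⟨h0, hj⟩

lemma gF_eq {j : ℕ} (h0 : 0 < j) (hj : j < L) (k : Fin (rkF L u j))
    (hk : (k:ℕ) < Module.finrank ℝ (Sspace L u j)) (b : Fin (2^(L-j))) :
    gF L u j k (b:ℕ)
      = ((Module.finBasis ℝ (Sspace L u j) ⟨(k:ℕ), hk⟩ : Sspace L u j) : Fin (2^(L-j)) → ℝ) b := by
  unfold gF
  rw [if_neg (by omega), if_neg (by omega), dif_pos hk, dif_pos b.isLt]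

lemma exists_coeff {j : ℕ} (h0 : 0 < j) (hj : j < L) {f : Fin (2^(L-j)) → ℝ}
    (hf : f ∈ Sspace L u j) :
    ∃ c : Fin (rkF L u j) → ℝ, ∀ b : Fin (2^(L-j)), f b = ∑ l, c l * gF L u j l (b:ℕ) := by
  classical
  set S := Sspace L u j with hS
  set B := Module.finBasis ℝ S with hB
  have hrk := rkF_mid L u h0 hj
  have hrepr : (⟨f, hf⟩ : S) = ∑ l, B.repr ⟨f, hf⟩ l • B l := (B.sum_repr ⟨f, hf⟩).symm
  refine ⟨fun l => B.repr ⟨f, hf⟩ ⟨(l:ℕ), hrk ▸ l.isLt⟩, fun b => ?_⟩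
  have hfb : f b = ∑ l, B.repr ⟨f, hf⟩ l * ((B l : S) : Fin (2^(L-j)) → ℝ) b := by
    have := congrArg (fun (v : S) => (v : Fin (2^(L-j)) → ℝ) b) hrepr
    simp only [Submodule.coe_sum, Submodule.coe_smul, Finset.sum_apply, Pi.smul_apply,
      smul_eq_mul] at this
    exact this
  rw [hfb]
  refine (Fintype.sum_equiv (finCongr hrk)
    (fun l : Fin (rkF L u j) => B.repr ⟨f, hf⟩ ⟨(l:ℕ), hrk ▸ l.isLt⟩ * gF L u j l (b:ℕ))
    (fun m => B.repr ⟨f, hf⟩ m * ((B m : S) : Fin (2^(L-j)) → ℝ) b)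
    (fun l => ?_)).symm
  rw [gF_eq L u h0 hj l (hrk ▸ l.isLt)]
  rfl

lemma gF_mem {j : ℕ} (h0 : 0 < j) (hj : j < L) (k : Fin (rkF L u j)) :
    (fun b : Fin (2^(L-j)) => gF L u j k (b:ℕ)) ∈ Sspace L u j := by
  have hrk := rkF_mid L u h0 hj
  have hk : (k:ℕ) < Module.finrank ℝ (Sspace L u j) := hrk ▸ k.isLt
  have : (fun b : Fin (2^(L-j)) => gF L u j k (b:ℕ))
      = ((Module.finBasis ℝ (Sspace L u j) ⟨(k:ℕ), hk⟩ : Sspace L u j) : Fin (2^(L-j)) → ℝ) := by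
    funext b; exact gF_eq L u h0 hj k hk b
  rw [this]
  exact SetLike.coe_mem _

lemma half_lt {L j : ℕ} (hj : j < L) (i : Fin 2) {b : ℕ} (hb : b < 2^(L-(j+1))) :
    (i:ℕ) * 2^(L-(j+1)) + b < 2^(L-j) := by
  have h2 := pow_split hj
  have h3 : (i:ℕ) ≤ 1 := Nat.lt_succ_iff.mp i.isLt
  have h4 : (i:ℕ) * 2^(L-(j+1)) ≤ 1 * 2^(L-(j+1)) := Nat.mul_le_mul_right _ h3
  rw [one_mul] at h4
  omega

lemma mem_half {j : ℕ} (hj : j < L) (i : Fin 2) {f : Fin (2^(L-j)) → ℝ}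
    (hf : f ∈ Sspace L u j) :
    (fun b : Fin (2^(L-(j+1))) => f ⟨(i:ℕ) * 2^(L-(j+1)) + (b:ℕ), half_lt hj i b.isLt⟩)
      ∈ Sspace L u (j+1) := by
  set e : Fin (2^(L-(j+1))) → Fin (2^(L-j)) :=
    fun b => ⟨(i:ℕ) * 2^(L-(j+1)) + (b:ℕ), half_lt hj i b.isLt⟩ with he
  have h1 : (fun b => f (e b)) = LinearMap.funLeft ℝ ℝ e f := rfl
  rw [h1]
  have hmap : (Sspace L u j).map (LinearMap.funLeft ℝ ℝ e) ≤ Sspace L u (j+1) := by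
    rw [Sspace, Submodule.map_span, Submodule.span_le]
    rintro _ ⟨_, ⟨a, rfl⟩, rfl⟩
    apply Submodule.subset_span
    have hlt : 2 * (a:ℕ) + (i:ℕ) < 2^(j+1) := by
      have := a.isLt
      have h3 : (i:ℕ) ≤ 1 := Nat.lt_succ_iff.mp i.isLt
      rw [pow_succ]
      omega
    refine ⟨⟨2 * (a:ℕ) + (i:ℕ), hlt⟩, ?_⟩
    funext b
    show u _ = (windowF L u j a) (e b)
    simp only [windowF, he]
    congr 1
    have h2 := pow_split hj
    set c := 2^(L-(j+1))
    rw [h2]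
    ring
  exact hmap (Submodule.mem_map_of_mem hf)

end Spaces

section Count

lemma card_strict_incr_le {φ : ℕ → ℕ} (hφ : Monotone φ) (n : ℕ) :
    ((Finset.range n).filter (fun a => φ a < φ (a+1))).card ≤ φ n - φ 0 := by
  induction n with
  | zero => simp
  | succ n ih =>
    rw [Finset.range_add_one, Finset.filter_insert]
    have h0n : φ 0 ≤ φ n := hφ (Nat.zero_le n)
    have hmono : φ n ≤ φ (n+1) := hφ (Nat.le_succ n)
    by_cases h : φ n < φ (n+1)
    · rw [if_pos h, Finset.card_insert_of_notMem (by simp)]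
      omega
    · rw [if_neg h]
      omega

end Count

section RankBound

open Module Submodule

lemma finrank_S_le (L M : ℕ) (hM : 0 < M) (p : ℕ → ℕ) (x : ℕ → ℝ)
    (hx0 : x 0 = 0) (hxM : x M = 2^L - 1)
    (hmono : ∀ m < M, x m < x (m+1))
    (u : ℝ → ℝ) (P : ℕ → Polynomial ℝ)
    (hdeg : ∀ m, 1 ≤ m → m ≤ M → (P m).natDegree ≤ p m)
    (hu : ∀ m, 1 ≤ m → m ≤ M → ∀ t ∈ Set.Ico (x (m-1)) (x m), u t = (P m).eval t)
    (huM : u (x M) = (P M).eval (x M))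
    (j : ℕ) (h0 : 0 < j) (hj : j < L) :
    Module.finrank ℝ (Sspace L (fun t : ℕ => u t) j) ≤ (Finset.Icc 1 M).sup p + M := by
  classical
  set uvec : ℕ → ℝ := fun t : ℕ => u t with huvec
  have hex : ∀ t : ℕ, ∃ m, 1 ≤ m ∧ (m = M ∨ (t:ℝ) < x m) := fun t => ⟨M, hM, Or.inl rfl⟩
  set mIdx : ℕ → ℕ := fun t => Nat.find (hex t) with hmIdx
  have hspec : ∀ t, 1 ≤ mIdx t ∧ (mIdx t = M ∨ (t:ℝ) < x (mIdx t)) := fun t => Nat.find_spec (hex t)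
  have hmle : ∀ t, mIdx t ≤ M := fun t => Nat.find_le ⟨hM, Or.inl rfl⟩
  have hmidx_mono : ∀ s t : ℕ, s ≤ t → mIdx s ≤ mIdx t := by
    intro s t hst
    apply Nat.find_le
    obtain ⟨h1, h2⟩ := hspec t
    refine ⟨h1, ?_⟩
    rcases h2 with h | h
    · exact Or.inl h
    · exact Or.inr (lt_of_le_of_lt (by exact_mod_cast hst) h)
  have hlow : ∀ t : ℕ, x (mIdx t - 1) ≤ (t:ℝ) := by
    intro t
    by_cases h1 : mIdx t = 1
    · rw [h1]
      norm_num [hx0]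
    · have hge : 1 ≤ mIdx t - 1 := by have := (hspec t).1; omega
      have hmin := Nat.find_min (hex t) (show mIdx t - 1 < mIdx t by omega)
      push_neg at hmin
      exact (hmin hge).2
  have heval : ∀ t : ℕ, t < 2^L → uvec t = (P (mIdx t)).eval (t:ℝ) := by
    intro t ht
    by_cases hlt : (t:ℝ) < x (mIdx t)
    · exact hu (mIdx t) (hspec t).1 (hmle t) t ⟨hlow t, hlt⟩
    · have hMt : mIdx t = M := (hspec t).2.resolve_right hlt
      have h1 : x M ≤ (t:ℝ) := by rw [← hMt]; exact not_lt.mp hlt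
      have h2 : (t:ℝ) ≤ 2^L - 1 := by
        have h3 : (t:ℕ) + 1 ≤ 2^L := ht
        have h4 := (Nat.cast_le (α := ℝ)).mpr h3
        push_cast at h4
        linarith
      have h3 : (t:ℝ) = x M := le_antisymm (hxM ▸ h2) h1
      show u t = _
      rw [h3, hMt, huM]
  set c := 2^(L-j) with hc
  have hc1 : 1 ≤ c := Nat.one_le_two_pow
  set Pb := (Finset.Icc 1 M).sup p with hPb
  set monoV : Fin (Pb+1) → (Fin c → ℝ) := fun k b => ((b:ℕ):ℝ)^(k:ℕ) with hmonoV
  set Vpoly := Submodule.span ℝ (Set.range monoV) with hVp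
  set D := Finset.univ.filter
    (fun a : Fin (2^j) => mIdx ((a:ℕ)*c) ≠ mIdx ((a:ℕ)*c + (c-1))) with hD
  set Dirty := Submodule.span ℝ ((windowF L uvec j) '' ↑D) with hDirtydef
  have hwidx : ∀ (a : Fin (2^j)) (b : Fin c), (a:ℕ)*c + (b:ℕ) < 2^L := by
    intro a b
    have hb := b.isLt
    have h2 : ((a:ℕ)+1)*c ≤ 2^j * c := Nat.mul_le_mul_right _ a.isLt
    have h3 : 2^j * c = 2^L := by rw [hc, ← pow_add]; congr 1; omega
    have h4 : ((a:ℕ)+1)*c = (a:ℕ)*c + c := by ring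
    omega
  have claim1 : ∀ a : Fin (2^j), windowF L uvec j a ∈ Vpoly ⊔ Dirty := by
    intro a
    by_cases hd : a ∈ D
    · exact Submodule.mem_sup_right (Submodule.subset_span ⟨a, hd, rfl⟩)
    · have heqm : mIdx ((a:ℕ)*c) = mIdx ((a:ℕ)*c + (c-1)) := by
        by_contra h; exact hd (Finset.mem_filter.mpr ⟨Finset.mem_univ a, h⟩)
      set m := mIdx ((a:ℕ)*c) with hm
      have h1m : 1 ≤ m := (hspec _).1
      have hmM : m ≤ M := hmle _
      have hconst : ∀ b : Fin c, mIdx ((a:ℕ)*c + (b:ℕ)) = m := by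
        intro b
        have hbl : (a:ℕ)*c + (b:ℕ) ≤ (a:ℕ)*c + (c-1) := by have := b.isLt; omega
        have h1 := hmidx_mono ((a:ℕ)*c) ((a:ℕ)*c + (b:ℕ)) (Nat.le_add_right _ _)
        have h2 := hmidx_mono _ _ hbl
        omega
      set Q := (P m).comp (Polynomial.X + Polynomial.C ((((a:ℕ)*c : ℕ)):ℝ)) with hQ
      have hQdeg : Q.natDegree ≤ Pb := by
        rw [hQ, Polynomial.natDegree_comp, Polynomial.natDegree_X_add_C, mul_one]
        exact le_trans (hdeg m h1m hmM) (Finset.le_sup (Finset.mem_Icc.mpr ⟨h1m, hmM⟩))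
      have hwin : windowF L uvec j a = fun b : Fin c => Q.eval ((b:ℕ):ℝ) := by
        funext b
        show uvec ((a:ℕ)*c + (b:ℕ)) = _
        rw [heval _ (hwidx a b), hconst b, hQ, Polynomial.eval_comp]
        simp only [Polynomial.eval_add, Polynomial.eval_X, Polynomial.eval_C]
        congr 1
        push_cast
        ring
      have hwin2 : windowF L uvec j a = ∑ k : Fin (Pb+1), Q.coeff (k:ℕ) • monoV k := by
        rw [hwin]; funext b
        rw [Finset.sum_apply]
        rw [Polynomial.eval_eq_sum_range' (lt_of_le_of_lt hQdeg (Nat.lt_succ_self Pb))]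
        rw [← Fin.sum_univ_eq_sum_range (fun k => Q.coeff k * ((b:ℕ):ℝ)^k) (Pb+1)]
        exact Finset.sum_congr rfl fun k _ => by simp [hmonoV]
      rw [hwin2]
      apply Submodule.sum_smul_mem
      intro k _
      exact Submodule.mem_sup_left (Submodule.subset_span ⟨k, rfl⟩)
  have claim2 : Sspace L uvec j ≤ Vpoly ⊔ Dirty := by
    rw [Sspace, Submodule.span_le]
    rintro _ ⟨a, rfl⟩
    exact claim1 a
  have hDcard : D.card ≤ M - 1 := by
    set φ : ℕ → ℕ := fun a => mIdx (a * c) with hφ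
    have hφm : Monotone φ := fun s t hst => hmidx_mono _ _ (Nat.mul_le_mul_right c hst)
    have hsub : ∀ a : Fin (2^j), a ∈ D →
        (a:ℕ) ∈ (Finset.range (2^j)).filter (fun a => φ a < φ (a+1)) := by
      intro a ha
      have hne := (Finset.mem_filter.mp ha).2
      have h1 : mIdx ((a:ℕ)*c) ≤ mIdx ((a:ℕ)*c + (c-1)) := hmidx_mono _ _ (Nat.le_add_right _ _)
      have h4 : ((a:ℕ)+1)*c = (a:ℕ)*c + c := by ring
      have h2 : mIdx ((a:ℕ)*c + (c-1)) ≤ mIdx (((a:ℕ)+1)*c) := by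
        apply hmidx_mono
        omega
      refine Finset.mem_filter.mpr ⟨Finset.mem_range.mpr a.isLt, ?_⟩
      show φ (a:ℕ) < φ ((a:ℕ)+1)
      simp only [hφ]
      omega
    have hcard1 : D.card ≤ ((Finset.range (2^j)).filter (fun a => φ a < φ (a+1))).card :=
      Finset.card_le_card_of_injOn (fun a => (a:ℕ)) (fun a ha => hsub a ha)
        (fun a _ b _ h => Fin.ext h)
    have hcard2 := card_strict_incr_le hφm (2^j)
    have hφ0 : 1 ≤ φ 0 := (hspec _).1
    have hφn : φ (2^j) ≤ M := hmle _
    omega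
  have hfr1 : finrank ℝ Vpoly ≤ Pb + 1 :=
    le_trans (finrank_range_le_card monoV) (le_of_eq (Fintype.card_fin _))
  have hfr2 : finrank ℝ Dirty ≤ M - 1 := by
    have himg : (windowF L uvec j) '' ↑D = ↑(D.image (windowF L uvec j)) :=
      (Finset.coe_image).symm
    rw [hDirtydef, himg]
    exact le_trans (finrank_span_finset_le_card _) (le_trans Finset.card_image_le hDcard)
  calc finrank ℝ (Sspace L uvec j) ≤ finrank ℝ ↑(Vpoly ⊔ Dirty) := Submodule.finrank_mono claim2
    _ ≤ finrank ℝ Vpoly + finrank ℝ Dirty := Submodule.finrank_add_le_finrank_add_finrank _ _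
    _ ≤ (Pb + 1) + (M - 1) := add_le_add hfr1 hfr2
    _ ≤ Pb + M := by omega

end RankBound

/-- [Oseledets/Schwab, Lemma 3.7]: if `u` equals a polynomial `P_m` of
degree `p_m` on `[x_{m-1}, x_m)` for `1 ≤ m ≤ M`, where `0 = x₀ < … < x_M = 2^L - 1`, and
`u(x_M) = P_M(x_M)`, then the vector `(u(0),…,u(2^L-1))` admits a QTT decomposition with
ranks bounded by `P + M`, `P = max{p₁,…,p_M}`. -/
theorem stmt3 (L M : ℕ) (hL : 0 < L) (hM : 0 < M) (p : ℕ → ℕ) (x : ℕ → ℝ)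
    (hx0 : x 0 = 0) (hxM : x M = 2^L - 1)
    (hmono : ∀ m < M, x m < x (m+1))
    (u : ℝ → ℝ) (P : ℕ → Polynomial ℝ)
    (hdeg : ∀ m, 1 ≤ m → m ≤ M → (P m).natDegree ≤ p m)
    (hu : ∀ m, 1 ≤ m → m ≤ M → ∀ t ∈ Ico (x (m-1)) (x m), u t = (P m).eval t)
    (huM : u (x M) = (P M).eval (x M)) :
    HasQTT L (fun i : Fin (2^L) => u ((i:ℕ) : ℝ)) ((Finset.Icc 1 M).sup p + M) := by
  classical
  set uvec : ℕ → ℝ := fun t : ℕ => u t with huvec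
  refine ⟨rkF L uvec, ?_, ?_⟩
  · have h0 : rkF L uvec 0 = 1 := if_neg (by omega)
    have hLr : rkF L uvec L = 1 := if_neg (by omega)
    have hg0 : ∀ (k : Fin (rkF L uvec 0)) t, t < 2^L → gF L uvec 0 k t = uvec t := by
      intro k t ht; unfold gF; rw [if_pos rfl]
    have hgL : ∀ k : Fin (rkF L uvec L), gF L uvec L k 0 = 1 := by
      intro k; unfold gF; rw [if_neg (by omega), if_pos le_rfl]
    have hnest : ∀ j, j < L → ∀ (k : Fin (rkF L uvec j)) (i : Fin 2),
        ∃ c : Fin (rkF L uvec (j+1)) → ℝ, ∀ b, b < 2^(L-(j+1)) →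
          gF L uvec j k ((i:ℕ) * 2^(L-(j+1)) + b) = ∑ l, c l * gF L uvec (j+1) l b := by
      intro j hj k i
      by_cases hjt : j + 1 = L
      · have hrk1 : rkF L uvec (j+1) = 1 := by
          apply if_neg; omega
        refine ⟨fun _ => gF L uvec j k ((i:ℕ) * 2^(L-(j+1))), fun b hb => ?_⟩
        have hb0 : b = 0 := by
          rw [hjt] at hb; simp at hb; omega
        subst hb0
        have hg1 : ∀ l : Fin (rkF L uvec (j+1)), gF L uvec (j+1) l 0 = 1 := by
          intro l; unfold gF; rw [if_neg (by omega), if_pos (by omega)]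
        have hfinal : ∑ l : Fin (rkF L uvec (j+1)),
            gF L uvec j k ((i:ℕ)*2^(L-(j+1))) * gF L uvec (j+1) l 0
            = gF L uvec j k ((i:ℕ)*2^(L-(j+1)) + 0) := by
          calc ∑ l : Fin (rkF L uvec (j+1)),
              gF L uvec j k ((i:ℕ)*2^(L-(j+1))) * gF L uvec (j+1) l 0
              = ∑ _l : Fin (rkF L uvec (j+1)), gF L uvec j k ((i:ℕ)*2^(L-(j+1))) :=
                Finset.sum_congr rfl (fun l _ => by rw [hg1 l, mul_one])
            _ = gF L uvec j k ((i:ℕ)*2^(L-(j+1)) + 0) := by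
                rw [Finset.sum_const, Finset.card_univ, Fintype.card_fin, hrk1, one_smul, add_zero]
        exact hfinal.symm
      · have hj1 : j + 1 < L := by omega
        have hmem : (fun b : Fin (2^(L-(j+1))) => gF L uvec j k ((i:ℕ)*2^(L-(j+1)) + (b:ℕ)))
            ∈ Sspace L uvec (j+1) := by
          by_cases hj0 : j = 0
          · subst hj0
            have hg0' : ∀ t, gF L uvec 0 k t = uvec t := fun t => by unfold gF; rw [if_pos rfl]
            have heq : (fun b : Fin (2^(L-(0+1))) => gF L uvec 0 k ((i:ℕ)*2^(L-(0+1)) + (b:ℕ)))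
                = windowF L uvec 1 ⟨(i:ℕ), lt_of_lt_of_le i.isLt (by norm_num)⟩ := by
              funext b; rw [hg0']; rfl
            rw [heq]
            exact Submodule.subset_span ⟨_, rfl⟩
          · have h0j : 0 < j := by omega
            exact mem_half L uvec hj i (gF_mem L uvec h0j hj k)
        obtain ⟨c, hc⟩ := exists_coeff L uvec (by omega : 0 < j+1) hj1 hmem
        exact ⟨c, fun b hb => hc ⟨b, hb⟩⟩
    exact qtt_of_nested L uvec (rkF L uvec) h0 hLr (gF L uvec) hg0 hgL hnest
  · intro j hj0 hjL
    rw [rkF_mid L uvec hj0 hjL]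
    exact finrank_S_le L M hM p x hx0 hxM hmono u P hdeg hu huM j hj0 hjL
end

section
/- Let p, L ∈ ℕ and κ > 0, and let u be a continuous function on [0,1] that is a polynomial of degree at most p on each subinterval of the grid T^hp_κ = {0, min(1/4,κ), 1 − min(1/4,κ), 1} and satisfies u(0) = u(1) = 0. Then the L²(I)-orthogonal projection Π_L^{L²} u of u onto the space V^L₀ of continuous piecewise linear functions on the uniform grid T_L vanishing at 0 and 1 admits a QTT decomposition with respect to T_L^int with ranks bounded by 5(p + 9); in particular the ranks are bounded by C p with C independent of δ, L and p. -/
open MeasureTheory Set Polynomial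

open Matrix Kronecker

/-! ### digit sum -/

lemma sum_bits : ∀ (L i : ℕ), i < 2^L →
    (∑ j : Fin L, ((bits L i j : ℕ)) * 2^(L - 1 - (j:ℕ))) = i := by
  intro L
  induction L with
  | zero => intro i hi; interval_cases i <;> simp
  | succ L ih =>
    intro i hi
    rw [Fin.sum_univ_castSucc]
    have hlast : ((bits (L+1) i (Fin.last L) : ℕ)) = i % 2 := by
      simp [bits]
    have hcast : ∀ j : Fin L,
        ((bits (L+1) i j.castSucc : ℕ)) * 2^(L + 1 - 1 - (j.castSucc:ℕ))
          = (((bits L (i/2) j : ℕ)) * 2^(L - 1 - (j:ℕ))) * 2 := by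
      intro j
      have hj : (j : ℕ) < L := j.2
      have h1 : L + 1 - 1 - (j:ℕ) = (L - 1 - (j:ℕ)) + 1 := by omega
      have h2 : i / 2 ^ ((L - 1 - (j:ℕ)) + 1) = (i / 2) / 2 ^ (L - 1 - (j:ℕ)) := by
        rw [pow_succ']
        rw [Nat.div_div_eq_div_mul]
      simp only [bits, Fin.coe_castSucc, h1]
      rw [h2, pow_succ]
      ring
    rw [Finset.sum_congr rfl (fun j _ => hcast j), ← Finset.sum_mul, ih (i/2) (by omega),
      hlast]
    simp
    omega


def ttProd {S : Type} [Fintype S] [DecidableEq S] (V : ℕ → Fin 2 → Matrix S S ℝ) :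
    (n : ℕ) → (Fin n → Fin 2) → Matrix S S ℝ
  | 0, _ => 1
  | n+1, i => ttProd V n (fun j => i j.castSucc) * V n (i (Fin.last n))

def LinRep (L : ℕ) (S : Type) [Fintype S] [DecidableEq S] (u : Fin (2^L) → ℝ) : Prop :=
  ∃ (c d : S → ℝ) (V : ℕ → Fin 2 → Matrix S S ℝ),
    ∀ i : Fin (2^L), u i = c ⬝ᵥ (ttProd V L (bits L (i : ℕ))).mulVec d

lemma LinRep.congr {L : ℕ} {S : Type} [Fintype S] [DecidableEq S] {u v : Fin (2^L) → ℝ}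
    (h : LinRep L S u) (huv : ∀ i, u i = v i) : LinRep L S v := by
  obtain ⟨c, d, V, hV⟩ := h
  exact ⟨c, d, V, fun i => (huv i) ▸ hV i⟩

lemma dot_factor {S T : Type} [Fintype S] [Fintype T] (c f : S → ℝ) (c' g : T → ℝ) :
    (fun p : S × T => c p.1 * c' p.2) ⬝ᵥ (fun p => f p.1 * g p.2) = (c ⬝ᵥ f) * (c' ⬝ᵥ g) := by
  simp only [dotProduct, Fintype.sum_prod_type]
  rw [Finset.sum_mul_sum]
  exact Finset.sum_congr rfl fun x _ => Finset.sum_congr rfl fun y _ => by ring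

lemma LinRep.add {L : ℕ} {S T : Type} [Fintype S] [DecidableEq S] [Fintype T] [DecidableEq T]
    {u v : Fin (2^L) → ℝ} (hu : LinRep L S u) (hv : LinRep L T v) :
    LinRep L (S ⊕ T) (fun i => u i + v i) := by
  classical
  obtain ⟨c, d, V, hV⟩ := hu
  obtain ⟨c', d', W, hW⟩ := hv
  refine ⟨Sum.elim c c', Sum.elim d d', fun j b => fromBlocks (V j b) 0 0 (W j b), ?_⟩
  have key : ∀ (n : ℕ) (ib : Fin n → Fin 2),
      ttProd (fun j b => fromBlocks (V j b) 0 0 (W j b)) n ib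
        = fromBlocks (ttProd V n ib) 0 0 (ttProd W n ib) := by
    intro n
    induction n with
    | zero => intro ib; show (1:Matrix _ _ ℝ) = _; rw [ttProd, ttProd, Matrix.fromBlocks_one]
    | succ n ih =>
      intro ib
      show ttProd _ n _ * _ = _
      rw [ih, Matrix.fromBlocks_multiply]
      simp [ttProd]
  intro i
  show u i + v i = _
  rw [hV i, hW i, key, Matrix.fromBlocks_mulVec]
  simp [sumElim_dotProduct_sumElim]

lemma kron_mulVec {S T : Type} [Fintype S] [Fintype T] (A : Matrix S S ℝ) (B : Matrix T T ℝ)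
    (d : S → ℝ) (e : T → ℝ) :
    (A ⊗ₖ B).mulVec (fun p => d p.1 * e p.2) = fun p => A.mulVec d p.1 * B.mulVec e p.2 := by
  funext p
  simp only [Matrix.mulVec, dotProduct, kroneckerMap_apply, Fintype.sum_prod_type]
  rw [Finset.sum_mul_sum]
  exact Finset.sum_congr rfl fun x _ => Finset.sum_congr rfl fun y _ => by ring

lemma LinRep.mul {L : ℕ} {S T : Type} [Fintype S] [DecidableEq S] [Fintype T] [DecidableEq T]
    {u v : Fin (2^L) → ℝ} (hu : LinRep L S u) (hv : LinRep L T v) :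
    LinRep L (S × T) (fun i => u i * v i) := by
  obtain ⟨c, d, V, hV⟩ := hu
  obtain ⟨c', d', W, hW⟩ := hv
  refine ⟨fun p => c p.1 * c' p.2, fun p => d p.1 * d' p.2,
    fun j b => (V j b) ⊗ₖ (W j b), ?_⟩
  have key : ∀ (n : ℕ) (ib : Fin n → Fin 2),
      ttProd (fun j b => (V j b) ⊗ₖ (W j b)) n ib = (ttProd V n ib) ⊗ₖ (ttProd W n ib) := by
    intro n
    induction n with
    | zero => intro ib; show (1:Matrix _ _ ℝ) = _; rw [ttProd, ttProd, Matrix.one_kronecker_one]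
    | succ n ih =>
      intro ib
      show ttProd _ n _ * _ = _
      rw [ih, ← Matrix.mul_kronecker_mul]
      simp [ttProd]
  intro i
  show u i * v i = _
  rw [hV i, hW i, key, kron_mulVec, dot_factor]


lemma ttProd_succ {S : Type} [Fintype S] [DecidableEq S] (V : ℕ → Fin 2 → Matrix S S ℝ)
    (n : ℕ) (ib : Fin (n+1) → Fin 2) :
    ttProd V (n+1) ib = ttProd V n (fun j => ib j.castSucc) * V n (ib (Fin.last n)) := rfl



/-! ### exponential primitive -/

lemma ttProd_one_dim (V : ℕ → Fin 2 → Matrix (Fin 1) (Fin 1) ℝ) :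
    ∀ (n : ℕ) (ib : Fin n → Fin 2), ttProd V n ib 0 0 = ∏ j : Fin n, V (j:ℕ) (ib j) 0 0 := by
  intro n
  induction n with
  | zero => intro ib; simp [ttProd]
  | succ n ih =>
    intro ib
    rw [ttProd_succ, Matrix.mul_apply, Fin.sum_univ_one, ih, Fin.prod_univ_castSucc]
    simp

lemma linRep_exp (L : ℕ) (lam : ℝ) : LinRep L (Fin 1) (fun i => lam^((i:ℕ)+1)) := by
  refine ⟨fun _ => lam, fun _ => 1, fun j b => fun _ _ => lam^((b:ℕ) * 2^(L-1-j)), ?_⟩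
  intro i
  have h2 : ((i:ℕ)) < 2^L := i.2
  simp only [dotProduct, Fin.sum_univ_one, Matrix.mulVec, ttProd_one_dim]
  erw [ttProd_one_dim]
  beta_reduce
  rw [Finset.prod_pow_eq_pow_sum, sum_bits L _ h2, pow_succ]
  ring

/-! ### polynomial primitive -/

lemma linRep_poly (L D : ℕ) (P : Polynomial ℝ) (hP : P.natDegree ≤ D) :
    LinRep L (Fin (D+1)) (fun i => P.eval ((i:ℕ) : ℝ)) := by
  classical
  set w : ℕ → ℝ := fun j => ((2^(L-1-j) : ℕ) : ℝ) with hw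
  set V : ℕ → Fin 2 → Matrix (Fin (D+1)) (Fin (D+1)) ℝ := fun j b =>
    Matrix.of fun s t => if (s:ℕ) ≤ (t:ℕ) then
      ((t:ℕ).choose (s:ℕ) : ℝ) * (((b:ℕ):ℝ) * w j)^((t:ℕ)-(s:ℕ)) else 0 with hV
  set c : Fin (D+1) → ℝ := fun s => if (s:ℕ) = 0 then 1 else 0 with hc
  refine ⟨c, fun t => P.coeff (t:ℕ), V, ?_⟩
  have key : ∀ (n : ℕ) (ib : Fin n → Fin 2),
      Matrix.vecMul c (ttProd V n ib)
      = fun t : Fin (D+1) =>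
          ((∑ j : Fin n, (ib j : ℕ) * 2^(L-1-(j:ℕ)) : ℕ) : ℝ)^(t:ℕ) := by
    intro n
    induction n with
    | zero =>
      intro ib
      funext t
      show Matrix.vecMul c 1 t = _
      rw [Matrix.vecMul_one]
      rcases Nat.eq_zero_or_pos (t:ℕ) with h | h
      · have ht : t = 0 := Fin.ext h
        simp [hc, ht]
      · rw [hc]
        simp only [Finset.univ_eq_empty, Finset.sum_empty, Nat.cast_zero]
        rw [if_neg (by omega), zero_pow (by omega)]
    | succ n ih =>
      intro ib
      rw [ttProd_succ, ← Matrix.vecMul_vecMul, ih]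
      funext t
      refine Eq.trans (Fin.sum_univ_eq_sum_range (fun sv =>
        ((∑ j : Fin n, (ib j.castSucc : ℕ) * 2^(L-1-(j:ℕ)) : ℕ) : ℝ)^sv
          * (if sv ≤ (t:ℕ) then ((t:ℕ).choose sv : ℝ)
              * (((ib (Fin.last n):ℕ):ℝ) * w n)^((t:ℕ)-sv) else 0)) (D+1)) ?_
      rw [← Finset.sum_subset (Finset.range_subset_range.mpr (by omega : (t:ℕ)+1 ≤ D+1))
        (by intro x _ hx; simp at hx; rw [if_neg (by omega)]; ring)]
      rw [Fin.sum_univ_castSucc]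
      push_cast
      rw [add_pow]
      apply Finset.sum_congr rfl
      intro x hx
      simp only [Finset.mem_range] at hx
      rw [if_pos (by omega)]
      simp only [hw, Fin.coe_castSucc]
      push_cast
      rw [mul_pow]
      ring
  intro i
  rw [Matrix.dotProduct_mulVec, key]
  have h2 : ((i:ℕ)) < 2^L := i.2
  have hA : ((∑ j : Fin L, (bits L (i:ℕ) j : ℕ) * 2^(L-1-(j:ℕ)) : ℕ) : ℝ) = (((i:ℕ):ℝ)) := by
    rw [sum_bits L _ h2]
  rw [hA]
  show P.eval (((i:ℕ):ℝ)) = _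
  rw [Polynomial.eval_eq_sum_range' (by omega : P.natDegree < D+1)]
  refine Eq.symm (Eq.trans (Fin.sum_univ_eq_sum_range
    (fun tv => (((i:ℕ):ℝ))^tv * P.coeff tv) (D+1)) ?_)
  apply Finset.sum_congr rfl
  intro x _; ring


/-- digit extraction step: for `x < 2^L`, `n < L`:
`x / 2^(L-(n+1)) = 2 * (x / 2^(L-n)) + (bits L x ⟨n,_⟩ : ℕ)` -/
lemma pre_succ (L x n : ℕ) (hn : n < L) :
    x / 2^(L-(n+1)) = 2 * (x / 2^(L-n)) + x / 2^(L-1-n) % 2 := by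
  have h1 : L - (n+1) = L - 1 - n := by omega
  have h2 : L - n = (L - 1 - n) + 1 := by omega
  rw [h1, h2, pow_succ, ← Nat.div_div_eq_div_mul]
  omega

/-- step function primitive: indicator of `N ≤ i`. -/
lemma linRep_stepGE (L N : ℕ) (hN : N ≤ 2^L) :
    LinRep L (Fin 2) (fun i => if N ≤ (i:ℕ) then (1:ℝ) else 0) := by
  classical
  rcases eq_or_lt_of_le hN with hN | hN
  · -- N = 2^L : identically zero
    refine ⟨0, 0, fun _ _ => 1, ?_⟩
    intro i
    have : ¬ N ≤ (i:ℕ) := by have := i.2; omega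
    show (if N ≤ (i:ℕ) then (1:ℝ) else 0) = _
    rw [if_neg this]
    simp
  · set V : ℕ → Fin 2 → Matrix (Fin 2) (Fin 2) ℝ := fun j b =>
      !![if (b:ℕ) = N / 2^(L-1-j) % 2 then 1 else 0, if N / 2^(L-1-j) % 2 < (b:ℕ) then 1 else 0;
         0, 1] with hV
    refine ⟨![1, 0], ![1, 1], V, ?_⟩
    intro i
    have hi : (i:ℕ) < 2^L := i.2
    have key : ∀ n : ℕ, ∀ hn : n ≤ L,
        Matrix.vecMul ![1, 0] (ttProd V n (fun j : Fin n => bits L (i:ℕ) (j.castLE hn)))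
        = ![if (i:ℕ)/2^(L-n) = N/2^(L-n) then 1 else 0,
            if N/2^(L-n) < (i:ℕ)/2^(L-n) then 1 else 0] := by
      intro n
      induction n with
      | zero =>
        intro _
        have z1 : (i:ℕ)/2^(L-0) = 0 := Nat.div_eq_of_lt (by simpa using hi)
        have z2 : N/2^(L-0) = 0 := Nat.div_eq_of_lt (by simpa using hN)
        rw [z1, z2]
        show Matrix.vecMul _ 1 = _
        rw [Matrix.vecMul_one]
        simp
      | succ n ih =>
        intro hn1
        rw [ttProd_succ]
        have hre : (fun j : Fin n =>
            (fun j : Fin (n+1) => bits L (i:ℕ) (j.castLE hn1)) j.castSucc)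
            = fun j : Fin n => bits L (i:ℕ) (j.castLE (by omega : n ≤ L)) := by
          funext j; rfl
        rw [← Matrix.vecMul_vecMul, hre, ih (by omega)]
        have hbv : (((fun j : Fin (n+1) => bits L (i:ℕ) (j.castLE hn1)) (Fin.last n)) : ℕ)
            = (i:ℕ)/2^(L-1-n) % 2 := rfl
        have hprei := pre_succ L (i:ℕ) n (by omega)
        have hpreN := pre_succ L N n (by omega)
        funext t
        fin_cases t <;>
          simp only [hV, Matrix.vecMul, dotProduct, Fin.sum_univ_two, hbv,
            Matrix.cons_val_zero, Matrix.cons_val_one, Matrix.head_cons, Matrix.of_apply,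
            Matrix.cons_val', Matrix.head_fin_const, Matrix.empty_val',
            Matrix.cons_val_fin_one] <;>
          split_ifs <;> norm_num <;> omega
    have hLL : (fun j : Fin L => bits L (i:ℕ) (j.castLE (le_refl L))) = bits L (i:ℕ) := by
      funext j; rfl
    rw [Matrix.dotProduct_mulVec, ← hLL, key L (le_refl L)]
    have z1 : (i:ℕ)/2^(L-L) = (i:ℕ) := by simp
    have z2 : N/2^(L-L) = N := by simp
    rw [z1, z2]
    show (if N ≤ (i:ℕ) then (1:ℝ) else 0) = _
    simp only [dotProduct, Fin.sum_univ_two, Matrix.cons_val_zero, Matrix.cons_val_one,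
      Matrix.head_cons]
    split_ifs <;> norm_num <;> omega


lemma qttEntry_succ {rk : ℕ → ℕ}
    (V : ∀ j : ℕ, Fin 2 → Matrix (Fin (rk j)) (Fin (rk (j+1))) ℝ)
    (n : ℕ) (i : Fin (n+1) → Fin 2) :
    qttEntry V (n+1) i
      = qttEntry V n (fun j => i j.castSucc) * V n (i (Fin.last n)) := rfl

/-- trivial case `L = 1`: any vector has a rank-one QTT decomposition. -/
lemma hasQTT_L1 (u : Fin (2^1) → ℝ) (r : ℕ) : HasQTT 1 u r := by
  refine ⟨fun _ => 1, ⟨rfl, rfl, fun j b => Matrix.of fun _ _ => u ⟨(b:ℕ) % 2, by omega⟩, ?_⟩,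
    fun j h1 h2 => by omega⟩
  intro i a b
  rw [qttEntry_succ, Matrix.mul_apply, Fin.sum_univ_one]
  have h0 : qttEntry (rk := fun _ => 1)
      (fun j b => Matrix.of fun _ _ => u ⟨(b:ℕ) % 2, by omega⟩) 0
      (fun j => bits 1 (i:ℕ) j.castSucc) a 0 = 1 := by
    have ha : a = 0 := Subsingleton.elim a 0
    rw [show qttEntry (rk := fun _ => 1)
      (fun j b => Matrix.of fun _ _ => u ⟨(b:ℕ) % 2, by omega⟩) 0
      (fun j => bits 1 (i:ℕ) j.castSucc) = 1 from rfl, ha]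
    exact Matrix.one_apply_eq 0
  rw [h0, one_mul]
  have hieq : i = ⟨((bits 1 (i:ℕ) (Fin.last 0)) : ℕ) % 2, by omega⟩ := by
    apply Fin.ext
    show (i:ℕ) = ((i:ℕ) / 2^(1-1-0) % 2) % 2
    have h2 := i.2
    norm_num at h2 ⊢
    omega
  conv_lhs => rw [hieq]
  rfl

lemma LinRep.hasQTT {L r : ℕ} (hL : 0 < L) {S : Type} [Fintype S] [DecidableEq S] [Nonempty S]
    {u : Fin (2^L) → ℝ} (h : LinRep L S u) (hr : Fintype.card S ≤ r) : HasQTT L u r := by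
  classical
  obtain ⟨c, d, V, hV⟩ := h
  rcases Nat.lt_or_ge L 2 with hL2 | hL2
  · interval_cases L
    exact hasQTT_L1 u r
  set R := Fintype.card S with hR
  have hR0 : 0 < R := Fintype.card_pos
  set e : Fin R ≃ S := (Fintype.equivFin S).symm with he
  set ι : ℕ → S := fun x => e ⟨x % R, Nat.mod_lt _ hR0⟩ with hι
  set rk : ℕ → ℕ := fun j => if j = 0 ∨ L ≤ j then 1 else R with hrk
  have hrk0 : rk 0 = 1 := by simp [hrk]
  have hrkL : rk L = 1 := by simp [hrk]
  have hrkmid : ∀ j, 1 ≤ j → j ≤ L-1 → rk j = R := by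
    intro j h1 h2; simp only [hrk]; rw [if_neg (by omega)]
  set W : ∀ j : ℕ, Fin 2 → Matrix (Fin (rk j)) (Fin (rk (j+1))) ℝ := fun j b =>
    Matrix.of fun x y =>
      if j = 0 then Matrix.vecMul c (V 0 b) (ι (y:ℕ))
      else if j = L - 1 then Matrix.mulVec (V j b) d (ι (x:ℕ))
      else V j b (ι (x:ℕ)) (ι (y:ℕ)) with hW
  have hψ : ∀ (n : ℕ) (hmid : rk n = R) (F : S → ℝ),
      (∑ x : Fin (rk n), F (ι (x:ℕ))) = ∑ s : S, F s := by
    intro n hmid F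
    refine Fintype.sum_equiv ((finCongr hmid).trans e) _ _ ?_
    intro x
    have hx : (x:ℕ) < R := by rw [← hmid]; exact x.2
    refine congrArg F ?_
    simp only [hι, Equiv.trans_apply]
    refine congrArg e ?_
    apply Fin.ext
    simp [Nat.mod_eq_of_lt hx]
  refine ⟨rk, ⟨hrk0, hrkL, W, ?_⟩,
    fun j h1 h2 => by simp only [hrk]; rw [if_neg (by omega)]; exact hr⟩
  intro i a b
  have key : ∀ n : ℕ, 1 ≤ n → n ≤ L - 1 → ∀ (ib : Fin n → Fin 2) (y : Fin (rk n)),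
      qttEntry W n ib a y = Matrix.vecMul c (ttProd V n ib) (ι (y:ℕ)) := by
    intro n
    induction n with
    | zero => omega
    | succ n ih =>
      intro h1 h2 ib y
      rcases Nat.eq_zero_or_pos n with rfl | hn
      · -- n+1 = 1
        rw [qttEntry_succ, Matrix.mul_apply]
        rw [Finset.sum_eq_single a
          (fun k _ hk => absurd (Fin.ext (by
            have h1' := k.2
            have h2' := a.2
            omega)) hk)
          (fun h => absurd (Finset.mem_univ a) h)]
        have hone : qttEntry W 0 (fun j => ib j.castSucc) a a = 1 := by
          rw [show qttEntry W 0 (fun j => ib j.castSucc) = 1 from rfl]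
          exact Matrix.one_apply_eq a
        rw [hone, one_mul]
        have hWa : W 0 (ib (Fin.last 0)) a y
            = Matrix.vecMul c (V 0 (ib (Fin.last 0))) (ι (y:ℕ)) := by
          simp only [hW, Matrix.of_apply]
          norm_num
        rw [hWa]
        have : ttProd V 1 ib = V 0 (ib (Fin.last 0)) := by
          rw [ttProd_succ, show ttProd V 0 (fun j => ib j.castSucc) = 1 from rfl, one_mul]
        rw [this]
      · -- n ≥ 1
        rw [qttEntry_succ, Matrix.mul_apply]
        have hmid : rk n = R := hrkmid n hn (by omega)
        have hWmid : ∀ (x : Fin (rk n)),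
            W n (ib (Fin.last n)) x y
              = V n (ib (Fin.last n)) (ι (x:ℕ)) (ι (y:ℕ)) := by
          intro x
          simp only [hW, Matrix.of_apply]
          rw [if_neg (by omega), if_neg (by omega)]
        calc (∑ x : Fin (rk n), qttEntry W n (fun j => ib j.castSucc) a x
                * W n (ib (Fin.last n)) x y)
            = ∑ x : Fin (rk n), Matrix.vecMul c (ttProd V n (fun j => ib j.castSucc)) (ι (x:ℕ))
                * V n (ib (Fin.last n)) (ι (x:ℕ)) (ι (y:ℕ)) := by
              refine Finset.sum_congr rfl fun x _ => ?_
              rw [ih hn (by omega), hWmid]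
          _ = ∑ s : S, Matrix.vecMul c (ttProd V n (fun j => ib j.castSucc)) s
                * V n (ib (Fin.last n)) s (ι (y:ℕ)) :=
              hψ n hmid (fun s => Matrix.vecMul c (ttProd V n (fun j => ib j.castSucc)) s
                * V n (ib (Fin.last n)) s (ι (y:ℕ)))
          _ = Matrix.vecMul (Matrix.vecMul c (ttProd V n (fun j => ib j.castSucc)))
                (V n (ib (Fin.last n))) (ι (y:ℕ)) := rfl
          _ = Matrix.vecMul c (ttProd V (n+1) ib) (ι (y:ℕ)) := by
              rw [Matrix.vecMul_vecMul, ttProd_succ]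
  -- final step
  obtain ⟨M, rfl⟩ : ∃ M, L = M + 1 := ⟨L - 1, by omega⟩
  rw [hV i, qttEntry_succ, Matrix.mul_apply]
  have hmid : rk M = R := hrkmid M (by omega) (by omega)
  have hWlast : ∀ (x : Fin (rk M)),
      W M (bits (M+1) (i:ℕ) (Fin.last M)) x b
        = Matrix.mulVec (V M (bits (M+1) (i:ℕ) (Fin.last M))) d (ι (x:ℕ)) := by
    intro x
    simp only [hW, Matrix.of_apply]
    rw [if_neg (by omega), if_pos (by omega)]
  calc c ⬝ᵥ (ttProd V (M+1) (bits (M+1) (i:ℕ))).mulVec d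
      = Matrix.vecMul c (ttProd V M (fun j => bits (M+1) (i:ℕ) j.castSucc))
          ⬝ᵥ (V M (bits (M+1) (i:ℕ) (Fin.last M))).mulVec d := by
        rw [ttProd_succ, ← Matrix.dotProduct_mulVec, Matrix.mulVec_mulVec]
    _ = ∑ s : S, Matrix.vecMul c (ttProd V M (fun j => bits (M+1) (i:ℕ) j.castSucc)) s
          * Matrix.mulVec (V M (bits (M+1) (i:ℕ) (Fin.last M))) d s := rfl
    _ = ∑ x : Fin (rk M), Matrix.vecMul c (ttProd V M (fun j => bits (M+1) (i:ℕ) j.castSucc)) (ι (x:ℕ))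
          * Matrix.mulVec (V M (bits (M+1) (i:ℕ) (Fin.last M))) d (ι (x:ℕ)) :=
        (hψ M hmid _).symm
    _ = ∑ x : Fin (rk M), qttEntry W M (fun j => bits (M+1) (i:ℕ) j.castSucc) a x
          * W M (bits (M+1) (i:ℕ) (Fin.last M)) x b := by
        refine Finset.sum_congr rfl fun x _ => ?_
        rw [key M (by omega) (by omega), hWlast]


lemma gridh_pos (L : ℕ) : 0 < gridh L := by
  have : (0:ℝ) < 2^L + 1 := by positivity
  exact div_pos one_pos this

lemma gridh_last (L : ℕ) : ((2^L : ℕ) + 1 : ℝ) * gridh L = 1 := by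
  rw [gridh]
  have : ((2:ℝ))^L + 1 ≠ 0 := by positivity
  push_cast
  field_simp

lemma hat_continuous (L m : ℕ) : Continuous (hat L m) := by
  apply Continuous.max continuous_const
  fun_prop

lemma hat_zero_of_le (L m : ℕ) {x : ℝ} (hx : x ≤ ((m:ℝ)-1) * gridh L) : hat L m x = 0 := by
  have h0 := gridh_pos L
  apply max_eq_left
  have habs : gridh L ≤ |x - (m:ℝ)*gridh L| := by
    rw [abs_sub_comm, le_abs]
    left; nlinarith
  have h2 : 1 ≤ |x - (m:ℝ)*gridh L| / gridh L := by
    rw [le_div_iff₀ h0]; linarith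
  linarith

lemma hat_zero_of_ge (L m : ℕ) {x : ℝ} (hx : ((m:ℝ)+1) * gridh L ≤ x) : hat L m x = 0 := by
  have h0 := gridh_pos L
  apply max_eq_left
  have habs : gridh L ≤ |x - (m:ℝ)*gridh L| := by
    rw [le_abs]; left; nlinarith
  have h2 : 1 ≤ |x - (m:ℝ)*gridh L| / gridh L := by
    rw [le_div_iff₀ h0]; linarith
  linarith

lemma hat_formula_rise (L m : ℕ) {x : ℝ} (h1 : ((m:ℝ)-1) * gridh L ≤ x) (h2 : x ≤ (m:ℝ) * gridh L) :
    hat L m x = (x - ((m:ℝ)-1) * gridh L) / gridh L := by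
  have h0 := gridh_pos L
  have habs : |x - (m:ℝ)*gridh L| = (m:ℝ)*gridh L - x := by
    rw [abs_sub_comm, abs_of_nonneg (by linarith)]
  rw [hat, habs]
  rw [max_eq_right]
  · field_simp; ring
  · have : ((m:ℝ)*gridh L - x) / gridh L ≤ 1 := by
      rw [div_le_one h0]; linarith
    linarith

lemma hat_formula_fall (L m : ℕ) {x : ℝ} (h1 : (m:ℝ) * gridh L ≤ x) (h2 : x ≤ ((m:ℝ)+1) * gridh L) :
    hat L m x = (((m:ℝ)+1) * gridh L - x) / gridh L := by
  have h0 := gridh_pos L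
  have habs : |x - (m:ℝ)*gridh L| = x - (m:ℝ)*gridh L := abs_of_nonneg (by linarith)
  rw [hat, habs]
  rw [max_eq_right]
  · field_simp; ring
  · have : (x - (m:ℝ)*gridh L) / gridh L ≤ 1 := by
      rw [div_le_one h0]; linarith
    linarith

lemma hat_PL0 (L m : ℕ) (hm1 : 1 ≤ m) (hm2 : m ≤ 2^L) : PL0 L (hat L m) := by
  have h0 := gridh_pos L
  refine ⟨⟨(hat_continuous L m).continuousOn, ?_⟩, ?_, ?_⟩
  · intro j hj
    rcases lt_or_ge (j+1) m with hc | hc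
    · -- j+1 ≤ m-1
      refine ⟨0, 0, fun x hx => ?_⟩
      rw [hat_zero_of_le L m (le_trans hx.2 ?_)]
      · ring
      · have hjm : ((j:ℝ)+1) ≤ (m:ℝ)-1 := by
          have h' : ((j:ℝ)) + 2 ≤ (m:ℝ) := by exact_mod_cast (by omega : j + 2 ≤ m)
          linarith
        nlinarith
    · rcases lt_or_ge j m with hc2 | hc2
      · -- j = m-1
        have hj : j + 1 = m := by omega
        refine ⟨1/gridh L, -((m:ℝ)-1), fun x hx => ?_⟩
        have hx1 : ((m:ℝ)-1) * gridh L ≤ x := by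
          have : ((m:ℝ)-1) = (j:ℝ) := by
            have : (j:ℝ) + 1 = (m:ℝ) := by exact_mod_cast congrArg Nat.cast hj
            linarith
          rw [this]; exact hx.1
        have hx2 : x ≤ (m:ℝ) * gridh L := by
          have : ((j:ℝ)+1) = (m:ℝ) := by exact_mod_cast congrArg Nat.cast hj
          rw [← this]; exact hx.2
        rw [hat_formula_rise L m hx1 hx2]
        field_simp
        ring
      · rcases eq_or_lt_of_le hc2 with hc3 | hc3
        · -- j = m
          refine ⟨-(1/gridh L), (m:ℝ)+1, fun x hx => ?_⟩
          have hx1 : (m:ℝ) * gridh L ≤ x := by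
            rw [show (m:ℝ) = (j:ℝ) by exact_mod_cast hc3]
            exact hx.1
          have hx2 : x ≤ ((m:ℝ)+1) * gridh L := by
            rw [show (m:ℝ) = (j:ℝ) by exact_mod_cast hc3]
            exact hx.2
          rw [hat_formula_fall L m hx1 hx2]
          field_simp
          ring
        · -- j ≥ m+1
          refine ⟨0, 0, fun x hx => ?_⟩
          rw [hat_zero_of_ge L m (le_trans ?_ hx.1)]
          · ring
          · have : (m:ℝ) + 1 ≤ (j:ℝ) := by exact_mod_cast hc3
            nlinarith
  · apply hat_zero_of_le
    have : (1:ℝ) ≤ (m:ℝ) := by exact_mod_cast hm1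
    nlinarith
  · apply hat_zero_of_ge
    have h1 : ((m:ℝ)+1) ≤ ((2^L:ℕ):ℝ) + 1 := by
      have : (m:ℝ) ≤ ((2^L:ℕ):ℝ) := by exact_mod_cast hm2
      linarith
    calc ((m:ℝ)+1) * gridh L ≤ (((2^L:ℕ):ℝ)+1) * gridh L := by nlinarith
      _ = 1 := gridh_last L

/-- quadratic interval integral -/
lemma integral_quad (α β γ c d : ℝ) :
    ∫ x in c..d, (α*x^2 + β*x + γ) = α*(d^3 - c^3)/3 + β*(d^2-c^2)/2 + γ*(d-c) := by
  have hderiv : ∀ x ∈ Set.uIcc c d,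
      HasDerivAt (fun x => α/3 * x^3 + (β/2 * x^2 + γ * x)) (α*x^2 + β*x + γ) x := by
    intro x _
    have h3 : HasDerivAt (fun x : ℝ => x^3) (3*x^2) x := by simpa using hasDerivAt_pow 3 x
    have h2 : HasDerivAt (fun x : ℝ => x^2) (2*x) x := by simpa using hasDerivAt_pow 2 x
    have h1 : HasDerivAt (fun x : ℝ => x) 1 x := hasDerivAt_id x
    have hval : α*x^2 + β*x + γ = α/3*(3*x^2) + (β/2*(2*x) + γ*1) := by ring
    rw [hval]
    exact (h3.const_mul (α/3)).add ((h2.const_mul (β/2)).add (h1.const_mul γ))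
  rw [intervalIntegral.integral_eq_sub_of_hasDerivAt hderiv
    (Continuous.intervalIntegrable (by continuity) c d)]
  ring

lemma int_rise (a b c h : ℝ) (hh : h ≠ 0) :
    ∫ x in c..(c+h), (a*x+b) * ((x-c)/h) = h*((a*c+b)/6 + (a*(c+h)+b)/3) := by
  have : ∀ x, (a*x+b) * ((x-c)/h) = (a/h)*x^2 + ((b-a*c)/h)*x + (-(b*c)/h) := by
    intro x; field_simp; ring
  rw [intervalIntegral.integral_congr (fun x _ => this x), integral_quad]
  field_simp
  ring

lemma int_fall (a b c h : ℝ) (hh : h ≠ 0) :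
    ∫ x in c..(c+h), (a*x+b) * ((c+h-x)/h) = h*((a*c+b)/3 + (a*(c+h)+b)/6) := by
  have : ∀ x, (a*x+b) * ((c+h-x)/h) = (-(a/h))*x^2 + ((a*(c+h)-b)/h)*x + (b*(c+h)/h) := by
    intro x; field_simp; ring
  rw [intervalIntegral.integral_congr (fun x _ => this x), integral_quad]
  field_simp
  ring

/-- polynomial antiderivative -/
noncomputable def antiP (P : Polynomial ℝ) : Polynomial ℝ :=
  P.sum fun n a => Polynomial.C (a/(n+1)) * Polynomial.X^(n+1)

lemma antiP_add (p q : Polynomial ℝ) : antiP (p + q) = antiP p + antiP q := by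
  unfold antiP
  apply Polynomial.sum_add_index
  · intro n; simp
  · intro n a b
    rw [← add_mul]
    congr 1
    rw [← Polynomial.C_add]
    congr 1
    ring

lemma antiP_natDegree (P : Polynomial ℝ) : (antiP P).natDegree ≤ P.natDegree + 1 := by
  unfold antiP Polynomial.sum
  apply Polynomial.natDegree_sum_le_of_forall_le
  intro i hi
  apply le_trans (Polynomial.natDegree_C_mul_le _ _)
  rw [Polynomial.natDegree_X_pow]
  have := Polynomial.le_natDegree_of_mem_supp i hi
  omega

lemma antiP_integral (P : Polynomial ℝ) :
    ∀ c d : ℝ, ∫ x in c..d, P.eval x = (antiP P).eval d - (antiP P).eval c := by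
  induction P using Polynomial.induction_on' with
  | add p q hp hq =>
    intro c d
    have hint : ∀ r : Polynomial ℝ, IntervalIntegrable (fun x => r.eval x) volume c d :=
      fun r => (Polynomial.continuous r).intervalIntegrable c d
    have : ∀ x : ℝ, (p+q).eval x = p.eval x + q.eval x := by intro x; simp
    rw [intervalIntegral.integral_congr (fun x _ => this x),
      intervalIntegral.integral_add (hint p) (hint q), hp, hq, antiP_add]
    simp
    ring
  | monomial n a =>
    intro c d
    have hm : antiP (Polynomial.monomial n a)
        = Polynomial.C (a/(n+1)) * Polynomial.X^(n+1) := by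
      unfold antiP
      apply Polynomial.sum_monomial_index
      simp
    have : ∀ x : ℝ, (Polynomial.monomial n a).eval x = a * x^n := by
      intro x; simp [Polynomial.eval_monomial]
    rw [intervalIntegral.integral_congr (fun x _ => this x),
      intervalIntegral.integral_const_mul, integral_pow, hm]
    simp
    have hn : ((n:ℝ)+1) ≠ 0 := by positivity
    field_simp

lemma integral_Ioo01 (f : ℝ → ℝ) :
    ∫ x in Ioo (0:ℝ) 1, f x = ∫ x in (0:ℝ)..1, f x := by
  rw [intervalIntegral.integral_of_le zero_le_one, MeasureTheory.integral_Ioc_eq_integral_Ioo]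

lemma split_hat (L m : ℕ) (hm1 : 1 ≤ m) (hm2 : m ≤ 2^L) (v : ℝ → ℝ)
    (hv : ContinuousOn v (Icc (0:ℝ) 1)) :
    ∫ x in Ioo (0:ℝ) 1, v x * hat L m x
    = (∫ x in (((m:ℝ)-1)*gridh L)..((m:ℝ)*gridh L),
        v x * ((x - ((m:ℝ)-1)*gridh L)/gridh L))
    + (∫ x in ((m:ℝ)*gridh L)..(((m:ℝ)+1)*gridh L),
        v x * ((((m:ℝ)+1)*gridh L - x)/gridh L)) := by
  have h0 := gridh_pos L
  set h := gridh L
  set c1 := ((m:ℝ)-1)*h with hc1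
  set c2 := (m:ℝ)*h with hc2
  set c3 := ((m:ℝ)+1)*h with hc3
  have hm1' : (1:ℝ) ≤ (m:ℝ) := by exact_mod_cast hm1
  have hm2' : (m:ℝ) ≤ (2^L:ℕ) := by exact_mod_cast hm2
  have h01 : 0 ≤ c1 := by rw [hc1]; nlinarith
  have h12 : c1 ≤ c2 := by rw [hc1, hc2]; nlinarith
  have h23 : c2 ≤ c3 := by rw [hc2, hc3]; nlinarith
  have hlast : (((2^L:ℕ):ℝ)+1) * h = 1 := gridh_last L
  have h31 : c3 ≤ 1 := by
    rw [hc3, ← hlast]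
    have : (m:ℝ) + 1 ≤ ((2^L:ℕ):ℝ) + 1 := by linarith
    nlinarith
  have hf : ContinuousOn (fun x => v x * hat L m x) (Icc (0:ℝ) 1) :=
    hv.mul (hat_continuous L m).continuousOn
  have hii : ∀ a b : ℝ, 0 ≤ a → a ≤ b → b ≤ 1 →
      IntervalIntegrable (fun x => v x * hat L m x) volume a b := by
    intro a b ha hab hb1
    apply ContinuousOn.intervalIntegrable
    apply hf.mono
    rw [Set.uIcc_of_le hab]
    exact Icc_subset_Icc ha hb1
  rw [integral_Ioo01]
  rw [← intervalIntegral.integral_add_adjacent_intervals (a := 0) (b := c1) (c := 1)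
    (hii 0 c1 le_rfl h01 (by linarith)) (hii c1 1 h01 (by linarith) le_rfl)]
  rw [← intervalIntegral.integral_add_adjacent_intervals (a := c1) (b := c2) (c := 1)
    (hii c1 c2 h01 h12 (by linarith)) (hii c2 1 (by linarith) (by linarith) le_rfl)]
  rw [← intervalIntegral.integral_add_adjacent_intervals (a := c2) (b := c3) (c := 1)
    (hii c2 c3 (by linarith) h23 (by linarith)) (hii c3 1 (by linarith) h31 le_rfl)]
  have hz1 : ∫ x in (0:ℝ)..c1, v x * hat L m x = 0 := by
    rw [intervalIntegral.integral_congr (g := fun _ => 0), intervalIntegral.integral_zero]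
    intro x hx
    rw [Set.uIcc_of_le h01] at hx
    simp only
    rw [hat_zero_of_le L m hx.2, mul_zero]
  have hz2 : ∫ x in c3..(1:ℝ), v x * hat L m x = 0 := by
    rw [intervalIntegral.integral_congr (g := fun _ => 0), intervalIntegral.integral_zero]
    intro x hx
    rw [Set.uIcc_of_le h31] at hx
    simp only
    rw [hat_zero_of_ge L m hx.1, mul_zero]
  have he1 : ∫ x in c1..c2, v x * hat L m x = ∫ x in c1..c2, v x * ((x - c1)/h) := by
    apply intervalIntegral.integral_congr
    intro x hx
    rw [Set.uIcc_of_le h12] at hx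
    simp only
    rw [hat_formula_rise L m hx.1 hx.2]
  have he2 : ∫ x in c2..c3, v x * hat L m x = ∫ x in c2..c3, v x * ((c3 - x)/h) := by
    apply intervalIntegral.integral_congr
    intro x hx
    rw [Set.uIcc_of_le h23] at hx
    simp only
    rw [hat_formula_fall L m hx.1 hx.2]
  rw [hz1, hz2, he1, he2]
  ring

lemma w_side (L m : ℕ) (hm1 : 1 ≤ m) (hm2 : m ≤ 2^L) (w : ℝ → ℝ) (hw : PL L w) :
    ∫ x in Ioo (0:ℝ) 1, w x * hat L m x
    = gridh L / 6 * (w (((m:ℝ)-1)*gridh L) + 4 * w ((m:ℝ)*gridh L)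
        + w (((m:ℝ)+1)*gridh L)) := by
  have h0 := gridh_pos L
  rw [split_hat L m hm1 hm2 w hw.1]
  set h := gridh L
  set c1 := ((m:ℝ)-1)*h with hc1
  set c2 := (m:ℝ)*h with hc2
  set c3 := ((m:ℝ)+1)*h with hc3
  obtain ⟨a1, b1, hab1⟩ := hw.2 (m-1) (by omega)
  obtain ⟨a2, b2, hab2⟩ := hw.2 m (by omega)
  have hcast : ((m-1:ℕ):ℝ) = (m:ℝ)-1 := by
    rw [Nat.cast_sub hm1]; norm_num
  have hab1' : ∀ x ∈ Icc c1 c2, w x = a1 * x + b1 := by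
    intro x hx
    apply hab1
    rw [hcast, hc1] at *
    constructor
    · exact hx.1
    · calc x ≤ c2 := hx.2
        _ = (((m:ℝ)-1)+1)*h := by rw [hc2]; ring
  have hab2' : ∀ x ∈ Icc c2 c3, w x = a2 * x + b2 := by
    intro x hx
    apply hab2
    exact ⟨hx.1, by rw [hc3] at hx; exact hx.2⟩
  have h12 : c1 ≤ c2 := by rw [hc1, hc2]; nlinarith
  have h23 : c2 ≤ c3 := by
    rw [hc2, hc3]
    have : (0:ℝ) ≤ (m:ℝ) := by positivity
    nlinarith
  have he1 : ∫ x in c1..c2, w x * ((x - c1)/h)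
      = ∫ x in c1..c2, (a1*x+b1) * ((x - c1)/h) := by
    apply intervalIntegral.integral_congr
    intro x hx
    rw [Set.uIcc_of_le h12] at hx
    simp only
    rw [hab1' x hx]
  have he2 : ∫ x in c2..c3, w x * ((c3 - x)/h)
      = ∫ x in c2..c3, (a2*x+b2) * ((c3 - x)/h) := by
    apply intervalIntegral.integral_congr
    intro x hx
    rw [Set.uIcc_of_le h23] at hx
    simp only
    rw [hab2' x hx]
  have hc2' : c2 = c1 + h := by rw [hc1, hc2]; ring
  have hc3' : c3 = c2 + h := by rw [hc2, hc3]; ring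
  rw [he1, he2, hc2', int_rise a1 b1 c1 h (ne_of_gt h0)]
  rw [show c3 = (c1 + h) + h by rw [hc3, hc1]; ring]
  rw [int_fall a2 b2 (c1+h) h (ne_of_gt h0)]
  have hw1 : w c1 = a1 * c1 + b1 := hab1' c1 ⟨le_rfl, h12⟩
  have hw2 : w c2 = a1 * c2 + b1 := hab1' c2 ⟨h12, le_rfl⟩
  have hw2' : w c2 = a2 * c2 + b2 := hab2' c2 ⟨le_rfl, h23⟩
  have hw3 : w c3 = a2 * c3 + b2 := hab2' c3 ⟨h23, le_rfl⟩
  have hw2c : w (c1 + h) = a1 * (c1+h) + b1 := by rw [← hc2']; exact hw2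
  have hw3c : w (c1 + h + h) = a2 * (c1+h+h) + b2 := by
    rw [show c1 + h + h = c3 by rw [hc3, hc1]; ring]
    exact hw3
  have hweq : a1 * (c1+h) + b1 = a2 * (c1+h) + b2 := by
    rw [← hw2c, hc2'.symm, hw2']
  rw [hw1, hw2c, hw3c, ← hweq]
  ring

noncomputable def uPoly (L : ℕ) (P : Polynomial ℝ) : Polynomial ℝ :=
  Polynomial.C (1/gridh L) *
    ( ((antiP (Polynomial.X * P)).comp (Polynomial.C (gridh L) * (Polynomial.X - Polynomial.C 1) + Polynomial.C (gridh L))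
        - (antiP (Polynomial.X * P)).comp (Polynomial.C (gridh L) * (Polynomial.X - Polynomial.C 1)))
      - (Polynomial.C (gridh L) * (Polynomial.X - Polynomial.C 1)) *
        ((antiP P).comp (Polynomial.C (gridh L) * (Polynomial.X - Polynomial.C 1) + Polynomial.C (gridh L))
          - (antiP P).comp (Polynomial.C (gridh L) * (Polynomial.X - Polynomial.C 1)))
      + (Polynomial.C (gridh L) * (Polynomial.X - Polynomial.C 1) + Polynomial.C (2*gridh L)) *
        ((antiP P).comp (Polynomial.C (gridh L) * (Polynomial.X - Polynomial.C 1) + Polynomial.C (2*gridh L))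
          - (antiP P).comp (Polynomial.C (gridh L) * (Polynomial.X - Polynomial.C 1) + Polynomial.C (gridh L)))
      - ((antiP (Polynomial.X * P)).comp (Polynomial.C (gridh L) * (Polynomial.X - Polynomial.C 1) + Polynomial.C (2*gridh L))
          - (antiP (Polynomial.X * P)).comp (Polynomial.C (gridh L) * (Polynomial.X - Polynomial.C 1) + Polynomial.C (gridh L))) )

lemma uPoly_natDegree (L : ℕ) (P : Polynomial ℝ) :
    (uPoly L P).natDegree ≤ P.natDegree + 2 := by
  set D := P.natDegree
  have hlin : ∀ c c' : ℝ, (Polynomial.C c * (Polynomial.X - Polynomial.C 1)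
      + Polynomial.C c' : Polynomial ℝ).natDegree ≤ 1 := by
    intro c c'
    apply le_trans (Polynomial.natDegree_add_le _ _)
    simp only [Polynomial.natDegree_C, max_le_iff]
    constructor
    · apply le_trans (Polynomial.natDegree_C_mul_le _ _)
      apply le_trans (Polynomial.natDegree_sub_le _ _)
      simp
    · omega
  have hQ0 : (antiP P).natDegree ≤ D + 1 := antiP_natDegree P
  have hQ1 : (antiP (Polynomial.X * P)).natDegree ≤ D + 2 := by
    apply le_trans (antiP_natDegree _)
    have : (Polynomial.X * P).natDegree ≤ 1 + D := by
      apply le_trans (Polynomial.natDegree_mul_le)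
      simp [Polynomial.natDegree_X]
      exact le_rfl
    omega
  have hcomp0 : ∀ (Q : Polynomial ℝ) (n : ℕ) (c : ℝ), Q.natDegree ≤ n →
      ((Q.comp (Polynomial.C c * (Polynomial.X - Polynomial.C 1))).natDegree ≤ n) := by
    intro Q n c hQ
    apply le_trans (Polynomial.natDegree_comp_le)
    have hl : (Polynomial.C c * (Polynomial.X - Polynomial.C 1) : Polynomial ℝ).natDegree ≤ 1 := by
      apply le_trans (Polynomial.natDegree_C_mul_le _ _)
      apply le_trans (Polynomial.natDegree_sub_le _ _)
      simp
    calc Q.natDegree * (Polynomial.C c * (Polynomial.X - Polynomial.C 1)).natDegree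
        ≤ n * 1 := Nat.mul_le_mul hQ hl
      _ = n := by omega
  have hcomp : ∀ (Q : Polynomial ℝ) (n : ℕ) (c c' : ℝ), Q.natDegree ≤ n →
      ((Q.comp (Polynomial.C c * (Polynomial.X - Polynomial.C 1) + Polynomial.C c')).natDegree ≤ n) := by
    intro Q n c c' hQ
    apply le_trans (Polynomial.natDegree_comp_le)
    calc Q.natDegree * (Polynomial.C c * (Polynomial.X - Polynomial.C 1) + Polynomial.C c').natDegree
        ≤ n * 1 := Nat.mul_le_mul hQ (hlin c c')
      _ = n := by omega
  unfold uPoly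
  apply le_trans (Polynomial.natDegree_C_mul_le _ _)
  apply le_trans (Polynomial.natDegree_sub_le _ _)
  rw [max_le_iff]
  constructor
  · apply le_trans (Polynomial.natDegree_add_le _ _)
    rw [max_le_iff]
    constructor
    · apply le_trans (Polynomial.natDegree_sub_le _ _)
      rw [max_le_iff]
      constructor
      · apply le_trans (Polynomial.natDegree_sub_le _ _)
        rw [max_le_iff]
        exact ⟨hcomp _ _ _ _ hQ1, hcomp0 _ _ _ hQ1⟩
      · apply le_trans (Polynomial.natDegree_mul_le)
        have h1 : (Polynomial.C (gridh L) * (Polynomial.X - Polynomial.C 1)).natDegree ≤ 1 := by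
          apply le_trans (Polynomial.natDegree_C_mul_le _ _)
          apply le_trans (Polynomial.natDegree_sub_le _ _)
          simp
        have h2 : ((antiP P).comp (Polynomial.C (gridh L) * (Polynomial.X - Polynomial.C 1) + Polynomial.C (gridh L))
            - (antiP P).comp (Polynomial.C (gridh L) * (Polynomial.X - Polynomial.C 1))).natDegree ≤ D + 1 := by
          apply le_trans (Polynomial.natDegree_sub_le _ _)
          rw [max_le_iff]
          exact ⟨hcomp _ _ _ _ hQ0, hcomp0 _ _ _ hQ0⟩
        calc _ ≤ 1 + (D + 1) := Nat.add_le_add h1 h2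
          _ = D + 2 := by omega
    · apply le_trans (Polynomial.natDegree_mul_le)
      have h1 : (Polynomial.C (gridh L) * (Polynomial.X - Polynomial.C 1)
          + Polynomial.C (2*gridh L)).natDegree ≤ 1 := hlin _ _
      have h2 : ((antiP P).comp (Polynomial.C (gridh L) * (Polynomial.X - Polynomial.C 1) + Polynomial.C (2*gridh L))
          - (antiP P).comp (Polynomial.C (gridh L) * (Polynomial.X - Polynomial.C 1) + Polynomial.C (gridh L))).natDegree ≤ D + 1 := by
        apply le_trans (Polynomial.natDegree_sub_le _ _)
        rw [max_le_iff]
        exact ⟨hcomp _ _ _ _ hQ0, hcomp _ _ _ _ hQ0⟩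
      calc _ ≤ 1 + (D + 1) := Nat.add_le_add h1 h2
        _ = D + 2 := by omega
  · apply le_trans (Polynomial.natDegree_sub_le _ _)
    rw [max_le_iff]
    exact ⟨hcomp _ _ _ _ hQ1, hcomp _ _ _ _ hQ1⟩

lemma u_side (L m : ℕ) (hm1 : 1 ≤ m) (hm2 : m ≤ 2^L) (u : ℝ → ℝ)
    (hu : ContinuousOn u (Icc (0:ℝ) 1)) (P : Polynomial ℝ)
    (hP : ∀ x ∈ Icc (((m:ℝ)-1)*gridh L) (((m:ℝ)+1)*gridh L), u x = P.eval x) :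
    ∫ x in Ioo (0:ℝ) 1, u x * hat L m x = (uPoly L P).eval (m:ℝ) := by
  have h0 := gridh_pos L
  rw [split_hat L m hm1 hm2 u hu]
  set h := gridh L
  set c1 := ((m:ℝ)-1)*h with hc1
  set c2 := (m:ℝ)*h with hc2
  set c3 := ((m:ℝ)+1)*h with hc3
  have h12 : c1 ≤ c2 := by rw [hc1, hc2]; nlinarith
  have h23 : c2 ≤ c3 := by
    rw [hc2, hc3]
    have : (0:ℝ) ≤ (m:ℝ) := by positivity
    nlinarith
  have hP1 : ∀ x ∈ Icc c1 c2, u x = P.eval x := fun x hx => hP x ⟨hx.1, le_trans hx.2 h23⟩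
  have hP2 : ∀ x ∈ Icc c2 c3, u x = P.eval x := fun x hx => hP x ⟨le_trans h12 hx.1, hx.2⟩
  have hint : ∀ a b : ℝ, ∀ Q : Polynomial ℝ,
      IntervalIntegrable (fun x => Q.eval x) volume a b :=
    fun a b Q => (Polynomial.continuous Q).intervalIntegrable a b
  have he1 : ∫ x in c1..c2, u x * ((x - c1)/h)
      = ∫ x in c1..c2, ((1/h) * (Polynomial.X*P).eval x - (c1/h) * P.eval x) := by
    apply intervalIntegral.integral_congr
    intro x hx
    rw [Set.uIcc_of_le h12] at hx
    simp only
    rw [hP1 x hx, Polynomial.eval_mul, Polynomial.eval_X]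
    field_simp
  have he2 : ∫ x in c2..c3, u x * ((c3 - x)/h)
      = ∫ x in c2..c3, ((c3/h) * P.eval x - (1/h) * (Polynomial.X*P).eval x) := by
    apply intervalIntegral.integral_congr
    intro x hx
    rw [Set.uIcc_of_le h23] at hx
    simp only
    rw [hP2 x hx, Polynomial.eval_mul, Polynomial.eval_X]
    field_simp
  rw [he1, he2]
  rw [intervalIntegral.integral_sub ((hint _ _ _).const_mul _) ((hint _ _ _).const_mul _),
    intervalIntegral.integral_sub ((hint _ _ _).const_mul _) ((hint _ _ _).const_mul _),
    intervalIntegral.integral_const_mul, intervalIntegral.integral_const_mul,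
    intervalIntegral.integral_const_mul, intervalIntegral.integral_const_mul,
    antiP_integral P, antiP_integral (Polynomial.X*P), antiP_integral P,
    antiP_integral (Polynomial.X*P)]
  unfold uPoly
  simp only [Polynomial.eval_mul, Polynomial.eval_add, Polynomial.eval_sub, Polynomial.eval_comp,
    Polynomial.eval_C, Polynomial.eval_X, Polynomial.eval_one]
  rw [show gridh L * ((m:ℝ) - 1) = c1 by rw [hc1]; ring,
    show c1 + gridh L = c2 by rw [hc1, hc2]; ring,
    show c1 + 2*gridh L = c3 by rw [hc1, hc3]; ring]
  simp only [show gridh L = h from rfl]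
  field_simp
  ring


/-- solving the three-term recurrence with a polynomial right-hand side. -/
lemma Tsolve (G : Polynomial ℝ) : ∃ S : Polynomial ℝ, S.natDegree ≤ G.natDegree ∧
    ∀ x : ℝ, S.eval x + 4 * S.eval (x+1) + S.eval (x+2) = G.eval (x+1) := by
  suffices hs : ∀ n : ℕ, ∀ G : Polynomial ℝ, G.natDegree ≤ n → ∃ S : Polynomial ℝ,
      S.natDegree ≤ G.natDegree ∧
      S.comp (X - C 1) + C 4 * S + S.comp (X + C 1) = G by
    obtain ⟨S, h1, h2⟩ := hs G.natDegree G le_rfl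
    refine ⟨S, h1, fun x => ?_⟩
    have := congrArg (Polynomial.eval (x+1)) h2
    simp only [Polynomial.eval_add, Polynomial.eval_comp, Polynomial.eval_sub,
      Polynomial.eval_mul, Polynomial.eval_C, Polynomial.eval_X] at this
    rw [show x + 1 - 1 = x by ring, show x + 1 + 1 = x + 2 by ring] at this
    linarith
  intro n
  induction n using Nat.strong_induction_on with
  | _ n ih =>
    intro G hGn
    rcases eq_or_ne G 0 with rfl | hG0
    · exact ⟨0, by simp⟩
    set S₀ : Polynomial ℝ := C (G.leadingCoeff / 6) * X ^ G.natDegree with hS₀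
    set R : Polynomial ℝ := G - (S₀.comp (X - C 1) + C 4 * S₀ + S₀.comp (X + C 1)) with hR
    have hS₀deg : S₀.natDegree ≤ G.natDegree := by
      apply le_trans (Polynomial.natDegree_C_mul_le _ _)
      simp
    have hsub : (X - C 1 : Polynomial ℝ) = X + C (-1) := by
      rw [Polynomial.C_neg]; ring
    have hcompdeg : ∀ c : ℝ, (S₀.comp (X + C c)).natDegree ≤ G.natDegree := by
      intro c
      apply le_trans (Polynomial.natDegree_comp_le)
      calc S₀.natDegree * (X + C c : Polynomial ℝ).natDegree ≤ G.natDegree * 1 := by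
            apply Nat.mul_le_mul hS₀deg
            apply le_trans (Polynomial.natDegree_add_le _ _)
            simp
        _ = G.natDegree := by omega
    have hcoeff : ∀ c : ℝ, (S₀.comp (X + C c)).coeff G.natDegree = G.leadingCoeff / 6 := by
      intro c
      rw [hS₀, Polynomial.mul_comp, Polynomial.C_comp, Polynomial.X_pow_comp,
        Polynomial.coeff_C_mul, Polynomial.coeff_X_add_C_pow]
      simp
    have hTdeg : (S₀.comp (X - C 1) + C 4 * S₀ + S₀.comp (X + C 1)).natDegree
        ≤ G.natDegree := by
      apply le_trans (Polynomial.natDegree_add_le _ _)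
      rw [max_le_iff]
      constructor
      · apply le_trans (Polynomial.natDegree_add_le _ _)
        rw [max_le_iff]
        refine ⟨by rw [hsub]; exact hcompdeg (-1), ?_⟩
        apply le_trans (Polynomial.natDegree_C_mul_le _ _)
        exact hS₀deg
      · exact hcompdeg 1
    have hS₀top : S₀.coeff G.natDegree = G.leadingCoeff / 6 := by
      rw [hS₀, Polynomial.coeff_C_mul, Polynomial.coeff_X_pow]
      simp
    have hRtop : R.coeff G.natDegree = 0 := by
      rw [hR]
      simp only [Polynomial.coeff_sub, Polynomial.coeff_add, Polynomial.coeff_C_mul]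
      have hc1 : (S₀.comp (X - C 1)).coeff G.natDegree = G.leadingCoeff / 6 := by
        rw [hsub]; exact hcoeff (-1)
      rw [hc1, hcoeff 1, hS₀top, Polynomial.coeff_natDegree]
      ring
    have hRdeg : R = 0 ∨ R.natDegree < G.natDegree := by
      rcases eq_or_ne R 0 with h | h
      · exact Or.inl h
      · right
        have hRn : R.natDegree ≤ G.natDegree := by
          rw [hR]
          apply le_trans (Polynomial.natDegree_sub_le _ _)
          rw [max_le_iff]
          exact ⟨le_rfl, hTdeg⟩
        rcases eq_or_lt_of_le hRn with heq | hlt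
        · exact absurd (Polynomial.leadingCoeff_eq_zero.mp
            (by rw [Polynomial.leadingCoeff, heq]; exact hRtop)) h
        · exact hlt
    rcases hRdeg with h | h
    · refine ⟨S₀, hS₀deg, ?_⟩
      have : G - (S₀.comp (X - C 1) + C 4 * S₀ + S₀.comp (X + C 1)) = 0 := h
      linear_combination -this
    · obtain ⟨S₁, hS₁deg, hS₁⟩ := ih R.natDegree (by omega) R le_rfl
      refine ⟨S₀ + S₁, ?_, ?_⟩
      · apply le_trans (Polynomial.natDegree_add_le _ _)
        rw [max_le_iff]
        exact ⟨hS₀deg, le_trans hS₁deg (le_of_lt h)⟩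
      · rw [Polynomial.add_comp, Polynomial.add_comp]
        have hRR : R = G - (S₀.comp (X - C 1) + C 4 * S₀ + S₀.comp (X + C 1)) := hR
        rw [hRR] at hS₁
        linear_combination hS₁

lemma lam_facts : ((-2+Real.sqrt 3) * (-2-Real.sqrt 3) = 1)
    ∧ (1 + 4*(-2+Real.sqrt 3) + (-2+Real.sqrt 3)^2 = 0)
    ∧ (1 + 4*(-2-Real.sqrt 3) + (-2-Real.sqrt 3)^2 = 0)
    ∧ ((-2-Real.sqrt 3) - (-2+Real.sqrt 3) ≠ 0) := by
  have h3 : Real.sqrt 3 ^ 2 = 3 := Real.sq_sqrt (by norm_num)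
  have hpos : 0 < Real.sqrt 3 := Real.sqrt_pos.mpr (by norm_num)
  refine ⟨by nlinarith, by nlinarith, by nlinarith, by nlinarith⟩

/-- pinning lemma: a solution of the inhomogeneous three-term recurrence on a range
agrees there with a polynomial plus exponentials. -/
lemma pin (y : ℕ → ℝ) (G : Polynomial ℝ) (A B : ℕ)
    (hrec : ∀ m : ℕ, A ≤ m → m + 2 ≤ B → y m + 4*y (m+1) + y (m+2) = G.eval ((m:ℝ)+1)) :
    ∃ (S : Polynomial ℝ) (α β : ℝ), S.natDegree ≤ G.natDegree ∧
      ∀ m : ℕ, A ≤ m → m ≤ B →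
        y m = S.eval (m:ℝ) + α*(-2+Real.sqrt 3)^m + β*(-2-Real.sqrt 3)^m := by
  obtain ⟨hprod, hlp, hlm, hD⟩ := lam_facts
  set lp := -2+Real.sqrt 3 with hlpdef
  set lm := -2-Real.sqrt 3 with hlmdef
  obtain ⟨S, hSdeg, hSrec⟩ := Tsolve G
  set z : ℕ → ℝ := fun m => y m - S.eval (m:ℝ) with hz
  set Dt : ℝ := lm - lp with hDt
  have hDt0 : Dt ≠ 0 := by rw [hDt]; exact hD
  set α : ℝ := (z A * lm^(A+1) - z (A+1) * lm^A)/Dt with hα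
  set β : ℝ := (z (A+1) * lp^A - z A * lp^(A+1))/Dt with hβ
  have hone : lp^A * lm^A = 1 := by rw [← mul_pow, hprod, one_pow]
  have key1 : (z A * lm^(A+1) - z (A+1) * lm^A) * lp^A
      + (z (A+1) * lp^A - z A * lp^(A+1)) * lm^A = z A * Dt := by
    rw [hDt]
    linear_combination (z A * (lm - lp)) * hone
  have key2 : (z A * lm^(A+1) - z (A+1) * lm^A) * lp^(A+1)
      + (z (A+1) * lp^A - z A * lp^(A+1)) * lm^(A+1) = z (A+1) * Dt := by
    rw [hDt]
    linear_combination (z (A+1) * (lm - lp)) * hone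
  have base1 : α * lp^A + β * lm^A = z A := by
    rw [hα, hβ, div_mul_eq_mul_div, div_mul_eq_mul_div, ← add_div, key1,
      mul_div_assoc, div_self hDt0, mul_one]
  have base2 : α * lp^(A+1) + β * lm^(A+1) = z (A+1) := by
    rw [hα, hβ, div_mul_eq_mul_div, div_mul_eq_mul_div, ← add_div, key2,
      mul_div_assoc, div_self hDt0, mul_one]
  set gf : ℕ → ℝ := fun m => S.eval (m:ℝ) + α*lp^m + β*lm^m with hgf
  have hg : ∀ m : ℕ, gf m + 4 * gf (m+1) + gf (m+2) = G.eval ((m:ℝ)+1) := by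
    intro m
    have hS := hSrec (m:ℝ)
    simp only [hgf]
    push_cast
    linear_combination hS + (α*lp^m)*hlp + (β*lm^m)*hlm
  have main : ∀ k : ℕ, A + k ≤ B → y (A+k) = gf (A+k) := by
    intro k
    induction k using Nat.strong_induction_on with
    | _ k ihk =>
      match k with
      | 0 =>
        intro _
        simp only [hgf, Nat.add_zero]
        have hzA : z A = y A - S.eval ((A:ℕ):ℝ) := rfl
        rw [hzA] at base1
        linarith [base1]
      | 1 =>
        intro _
        simp only [hgf]
        have hzA : z (A+1) = y (A+1) - S.eval (((A+1:ℕ)):ℝ) := rfl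
        rw [hzA] at base2
        linarith [base2]
      | (k+2) =>
        intro hk
        have h1 := ihk k (by omega) (by omega)
        have h2 := ihk (k+1) (by omega) (by omega)
        have hr := hrec (A+k) (by omega) (by omega)
        have hgk := hg (A+k)
        have e1 : A + (k+1) = (A+k) + 1 := by omega
        have e2 : A + (k+2) = (A+k) + 2 := by omega
        rw [e1] at h2
        rw [e2]
        linarith
  refine ⟨S, α, β, hSdeg, ?_⟩
  intro m hAm hmB
  obtain ⟨k, rfl⟩ : ∃ k, m = A + k := ⟨m - A, by omega⟩
  exact main k (by omega)



lemma LinRep.smul {L : ℕ} {S : Type} [Fintype S] [DecidableEq S] {u : Fin (2^L) → ℝ}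
    (cc : ℝ) (h : LinRep L S u) : LinRep L S (fun i => cc * u i) := by
  obtain ⟨c, d, V, hV⟩ := h
  refine ⟨cc • c, d, V, fun i => ?_⟩
  show cc * u i = _
  rw [smul_dotProduct, smul_eq_mul, hV i]

set_option maxHeartbeats 1000000 in
/-- QTT ranks of the `L²` projection onto `V^L₀`: if `u` is continuous
on `[0,1]`, polynomial of degree `≤ p` on each subinterval of
`T^hp_κ = {0, min(1/4,κ), 1-min(1/4,κ), 1}`, and `u(0) = u(1) = 0`, then any
`L²(I)`-orthogonal projection `w` of `u` onto `V^L₀` has a vector of nodal values at the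
interior nodes of `T_L` admitting a QTT decomposition with ranks bounded by `5(p+9)`. -/
theorem stmt5 (p L : ℕ) (hp : 0 < p) (hL : 0 < L) (κ : ℝ) (hκ : 0 < κ)
    (u : ℝ → ℝ) (hu : ContinuousOn u (Icc (0:ℝ) 1))
    (hu0 : u 0 = 0) (hu1 : u 1 = 0)
    (hpoly : ∃ P₁ P₂ P₃ : Polynomial ℝ,
      P₁.natDegree ≤ p ∧ P₂.natDegree ≤ p ∧ P₃.natDegree ≤ p ∧
      (∀ x ∈ Icc (0:ℝ) (min (1/4) κ), u x = P₁.eval x) ∧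
      (∀ x ∈ Icc (min (1/4) κ) (1 - min (1/4) κ), u x = P₂.eval x) ∧
      (∀ x ∈ Icc (1 - min (1/4) κ) 1, u x = P₃.eval x))
    (w : ℝ → ℝ) (hw : PL0 L w)
    (hproj : ∀ φ : ℝ → ℝ, PL0 L φ → ∫ x in Ioo (0:ℝ) 1, (w x - u x) * φ x = 0) :
    HasQTT L (fun i : Fin (2^L) => w ((((i:ℕ):ℝ)+1) * gridh L)) (5 * (p + 9)) := by
  classical
  obtain ⟨P₁, P₂, P₃, hd1, hd2, hd3, hu1p, hu2p, hu3p⟩ := hpoly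
  have h0 : 0 < gridh L := gridh_pos L
  set h : ℝ := gridh L with hh
  set n : ℕ := 2^L with hn
  have hn2 : 2 ≤ n := by
    rw [hn]
    calc 2 = 2^1 := rfl
      _ ≤ 2^L := Nat.pow_le_pow_right (by norm_num) hL
  have hlast : ((n:ℕ):ℝ) * h + h = 1 := by
    have := gridh_last L
    rw [← hh, ← hn] at this
    linarith [this]
  set κ' : ℝ := min (1/4 : ℝ) κ with hκ'
  have hκ'pos : 0 < κ' := lt_min (by norm_num) hκ
  have hκ'le : κ' ≤ 1/4 := min_le_left _ _
  set y : ℕ → ℝ := fun m => w ((m:ℝ) * h) with hy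
  -- master recurrence from the projection property
  have hrecP : ∀ (P : Polynomial ℝ) (c : ℕ), 1 ≤ c → c ≤ n →
      (∀ x ∈ Icc (((c:ℝ)-1)*h) (((c:ℝ)+1)*h), u x = P.eval x) →
      y (c-1) + 4 * y c + y (c+1) = (6/h) * (uPoly L P).eval (c:ℝ) := by
    intro P c hc1 hcn hreg
    have hcn' : c ≤ 2^L := by omega
    have hhat := hat_PL0 L c hc1 hcn'
    have hphi := hproj (hat L c) hhat
    have hw_cont : ContinuousOn w (Icc (0:ℝ) 1) := hw.1.1
    have hwi : IntegrableOn (fun x => w x * hat L c x) (Ioo (0:ℝ) 1) :=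
      ((hw_cont.mul (hat_continuous L c).continuousOn).integrableOn_Icc).mono_set
        Ioo_subset_Icc_self
    have hui : IntegrableOn (fun x => u x * hat L c x) (Ioo (0:ℝ) 1) :=
      ((hu.mul (hat_continuous L c).continuousOn).integrableOn_Icc).mono_set
        Ioo_subset_Icc_self
    have hsplit : ∫ x in Ioo (0:ℝ) 1, (w x - u x) * hat L c x
        = (∫ x in Ioo (0:ℝ) 1, w x * hat L c x) - ∫ x in Ioo (0:ℝ) 1, u x * hat L c x := by
      rw [← MeasureTheory.integral_sub hwi hui]
      apply MeasureTheory.integral_congr_ae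
      filter_upwards with x
      ring
    have heq : ∫ x in Ioo (0:ℝ) 1, w x * hat L c x = ∫ x in Ioo (0:ℝ) 1, u x * hat L c x := by
      rw [hsplit] at hphi; linarith
    rw [w_side L c hc1 hcn' w hw.1, u_side L c hc1 hcn' u hu P hreg] at heq
    have hy1 : w (((c:ℝ)-1)*h) = y (c-1) := by
      rw [hy]
      congr 2
      rw [Nat.cast_sub hc1]
      norm_num
    have hy2 : w ((c:ℝ)*h) = y c := rfl
    have hy3 : w (((c:ℝ)+1)*h) = y (c+1) := by
      rw [hy]
      congr 2
      push_cast
      ring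
    rw [hy1, hy2, hy3] at heq
    rw [← heq]
    field_simp
    ring
  -- the three right-hand side polynomials
  set G₁ : Polynomial ℝ := Polynomial.C (6/h) * uPoly L P₁ with hG₁
  set G₂ : Polynomial ℝ := Polynomial.C (6/h) * uPoly L P₂ with hG₂
  set G₃ : Polynomial ℝ := Polynomial.C (6/h) * uPoly L P₃ with hG₃
  have hdG : ∀ (G : Polynomial ℝ) (P : Polynomial ℝ), P.natDegree ≤ p →
      G = Polynomial.C (6/h) * uPoly L P → G.natDegree ≤ p + 2 := by
    intro G P hdP hGdef
    rw [hGdef]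
    apply le_trans (Polynomial.natDegree_C_mul_le _ _)
    apply le_trans (uPoly_natDegree L P)
    omega
  -- grid numbers
  set ab : ℕ := ⌊κ'/h⌋₊ with hab
  set a' : ℕ := ⌈κ'/h⌉₊ with ha'
  set bb : ℕ := ⌊(1-κ')/h⌋₊ with hbb
  set b' : ℕ := ⌈(1-κ')/h⌉₊ with hb'
  have hx0 : (0:ℝ) ≤ κ'/h := by positivity
  have hx0' : (0:ℝ) ≤ (1-κ')/h := by
    apply div_nonneg _ (le_of_lt h0); linarith
  have hab_le : (ab:ℝ) ≤ κ'/h := Nat.floor_le hx0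
  have ha'_ge : κ'/h ≤ (a':ℝ) := Nat.le_ceil _
  have ha'ab : a' ≤ ab + 1 := Nat.ceil_le_floor_add_one _
  have hbb_le : (bb:ℝ) ≤ (1-κ')/h := Nat.floor_le hx0'
  have hb'_ge : (1-κ')/h ≤ (b':ℝ) := Nat.le_ceil _
  have hb'bb : b' ≤ bb + 1 := Nat.ceil_le_floor_add_one _
  have hκn : κ'/h ≤ ((n:ℝ)+1)/4 := by
    rw [div_le_div_iff₀ h0 (by norm_num : (0:ℝ) < 4)]
    nlinarith [hlast]
  have hab_n : ab ≤ n := by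
    have hcast : (ab:ℝ) ≤ (n:ℝ) := by
      have h4 : ((n:ℝ)+1)/4 ≤ (n:ℝ) := by
        have : (2:ℝ) ≤ (n:ℝ) := by exact_mod_cast hn2
        linarith
      linarith
    exact_mod_cast hcast
  have hbb_n1 : bb ≤ n + 1 := by
    have hcast : (bb:ℝ) ≤ (n:ℝ) + 1 := by
      have : (1-κ')/h ≤ (n:ℝ)+1 := by
        rw [div_le_iff₀ h0]
        nlinarith [hlast]
      linarith
    exact_mod_cast hcast
  have hb'_n1 : b' ≤ n + 1 := by
    rw [hb']
    rw [Nat.ceil_le]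
    push_cast
    rw [div_le_iff₀ h0]
    nlinarith [hlast]
  have ha'b' : a' ≤ b' := by
    apply Nat.ceil_le_ceil
    gcongr
    linarith
  -- the three pinned solutions
  have hrec1 : ∀ m : ℕ, 0 ≤ m → m + 2 ≤ ab →
      y m + 4*y (m+1) + y (m+2) = G₁.eval ((m:ℝ)+1) := by
    intro m _ hm2
    have := hrecP P₁ (m+1) (by omega) (by omega) ?_
    · have e1 : (m+1) - 1 = m := by omega
      rw [e1] at this
      rw [hG₁, Polynomial.eval_mul, Polynomial.eval_C]
      push_cast at this ⊢
      linarith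
    · intro x hx
      obtain ⟨hxl, hxu⟩ := hx
      push_cast at hxl hxu
      apply hu1p
      have hm0 : (0:ℝ) ≤ (m:ℝ) := by positivity
      constructor
      · nlinarith [h0.le]
      · have hm2' : ((m:ℝ)+2) ≤ (ab:ℝ) := by exact_mod_cast hm2
        have habh : (ab:ℝ) * h ≤ κ' := by
          rw [← le_div_iff₀ h0]
          exact hab_le
        nlinarith
  have hrec2 : ∀ m : ℕ, a' ≤ m → m + 2 ≤ bb →
      y m + 4*y (m+1) + y (m+2) = G₂.eval ((m:ℝ)+1) := by
    intro m hma hm2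
    have := hrecP P₂ (m+1) (by omega) (by omega) ?_
    · have e1 : (m+1) - 1 = m := by omega
      rw [e1] at this
      rw [hG₂, Polynomial.eval_mul, Polynomial.eval_C]
      push_cast at this ⊢
      linarith
    · intro x hx
      obtain ⟨hxl, hxu⟩ := hx
      push_cast at hxl hxu
      apply hu2p
      have hma' : (a':ℝ) ≤ (m:ℝ) := by exact_mod_cast hma
      have hm2' : ((m:ℝ)+2) ≤ (bb:ℝ) := by exact_mod_cast hm2
      have ha'h : κ' ≤ (a':ℝ) * h := by
        rw [← div_le_iff₀ h0]
        exact ha'_ge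
      have hbbh : (bb:ℝ) * h ≤ 1 - κ' := by
        rw [← le_div_iff₀ h0]
        exact hbb_le
      constructor
      · nlinarith
      · nlinarith
  have hrec3 : ∀ m : ℕ, b' ≤ m → m + 2 ≤ n + 1 →
      y m + 4*y (m+1) + y (m+2) = G₃.eval ((m:ℝ)+1) := by
    intro m hmb hm2
    have := hrecP P₃ (m+1) (by omega) (by omega) ?_
    · have e1 : (m+1) - 1 = m := by omega
      rw [e1] at this
      rw [hG₃, Polynomial.eval_mul, Polynomial.eval_C]
      push_cast at this ⊢
      linarith
    · intro x hx
      obtain ⟨hxl, hxu⟩ := hx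
      push_cast at hxl hxu
      apply hu3p
      have hmb' : (b':ℝ) ≤ (m:ℝ) := by exact_mod_cast hmb
      have hm2' : ((m:ℝ)+2) ≤ ((n:ℝ)+1) := by exact_mod_cast hm2
      have hb'h : 1 - κ' ≤ (b':ℝ) * h := by
        rw [← div_le_iff₀ h0]
        exact hb'_ge
      constructor
      · nlinarith
      · nlinarith
  obtain ⟨S₁, α₁, β₁, hS1d, hg1⟩ := pin y G₁ 0 ab (fun m hm hm2 => hrec1 m hm hm2)
  obtain ⟨S₂, α₂, β₂, hS2d, hg2⟩ := pin y G₂ a' bb hrec2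
  obtain ⟨S₃, α₃, β₃, hS3d, hg3⟩ := pin y G₃ b' (n+1) hrec3
  have hS1p : S₁.natDegree ≤ p+2 := le_trans hS1d (hdG G₁ P₁ hd1 hG₁)
  have hS2p : S₂.natDegree ≤ p+2 := le_trans hS2d (hdG G₂ P₂ hd2 hG₂)
  have hS3p : S₃.natDegree ≤ p+2 := le_trans hS3d (hdG G₃ P₃ hd3 hG₃)
  set A : ℕ := a' - 1 with hA
  set B : ℕ := b' - 1 with hB
  have hAB : A ≤ B := by omega
  have hA2L : A ≤ 2^L := by omega
  have hB2L : B ≤ 2^L := by omega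
  -- LinRep of the generic solution form
  have hgrep : ∀ (S : Polynomial ℝ) (α β : ℝ), S.natDegree ≤ p+2 →
      LinRep L (Fin (p+3) ⊕ (Fin 1 ⊕ Fin 1))
        (fun i : Fin (2^L) => S.eval (((i:ℕ):ℝ)+1) + α*(-2+Real.sqrt 3)^((i:ℕ)+1)
          + β*(-2-Real.sqrt 3)^((i:ℕ)+1)) := by
    intro S α β hSd
    have hpoly1 : LinRep L (Fin (p+2+1))
        (fun i : Fin (2^L) => (S.comp (Polynomial.X + Polynomial.C 1)).eval ((i:ℕ):ℝ)) := by
      apply linRep_poly L (p+2) (S.comp (Polynomial.X + Polynomial.C 1))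
      apply le_trans (Polynomial.natDegree_comp_le)
      calc S.natDegree * (Polynomial.X + Polynomial.C 1 : Polynomial ℝ).natDegree
          ≤ (p+2) * 1 := by
            apply Nat.mul_le_mul hSd
            apply le_trans (Polynomial.natDegree_add_le _ _)
            simp
        _ = p+2 := by omega
    have he1 := LinRep.smul α (linRep_exp L (-2+Real.sqrt 3))
    have he2 := LinRep.smul β (linRep_exp L (-2-Real.sqrt 3))
    apply (hpoly1.add (he1.add he2)).congr
    intro i
    simp only [Polynomial.eval_comp, Polynomial.eval_add, Polynomial.eval_X, Polynomial.eval_C]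
    ring
  have hrep1 := hgrep S₁ α₁ β₁ hS1p
  have hrep21 := hgrep (S₂ - S₁) (α₂-α₁) (β₂-β₁)
    (le_trans (Polynomial.natDegree_sub_le _ _) (max_le hS2p hS1p))
  have hrep32 := hgrep (S₃ - S₂) (α₃-α₂) (β₃-β₂)
    (le_trans (Polynomial.natDegree_sub_le _ _) (max_le hS3p hS2p))
  have hstA := linRep_stepGE L A hA2L
  have hstB := linRep_stepGE L B hB2L
  have hfull := hrep1.add ((hstA.mul hrep21).add (hstB.mul hrep32))
  apply (hfull.congr ?_).hasQTT hL ?_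
  · -- pointwise identification
    intro i
    have hyi : w ((((i:ℕ):ℝ)+1) * h) = y ((i:ℕ)+1) := by
      rw [hy]
      congr 2
      push_cast
      ring
    have hcast : ∀ m : ℕ, (((m+1:ℕ)):ℝ) = ((m:ℕ):ℝ)+1 := by intro m; push_cast; ring
    have hin : (i:ℕ) < n := i.2
    simp only [Polynomial.eval_sub]
    rcases lt_or_ge ((i:ℕ)) A with hiA | hiA
    · rw [if_neg (by omega : ¬ A ≤ (i:ℕ)), if_neg (by omega : ¬ B ≤ (i:ℕ))]
      have h1 := hg1 ((i:ℕ)+1) (Nat.zero_le _) (by omega)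
      rw [hcast] at h1
      rw [hyi, h1]
      ring
    · rcases lt_or_ge ((i:ℕ)) B with hiB | hiB
      · rw [if_pos hiA, if_neg (by omega : ¬ B ≤ (i:ℕ))]
        have h2 := hg2 ((i:ℕ)+1) (by omega) (by omega)
        rw [hcast] at h2
        rw [hyi, h2]
        ring
      · rw [if_pos hiA, if_pos hiB]
        have h3 := hg3 ((i:ℕ)+1) (by omega) (by omega)
        rw [hcast] at h3
        rw [hyi, h3]
        ring
  · -- cardinality bound
    simp only [Fintype.card_sum, Fintype.card_prod, Fintype.card_fin]
    omega
end
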